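/- arXiv:2308.02324 — 7 statements merged into one kernel-verified Lean document; each statement's English description precedes it below -/
import Mathlib

section
/- For all real c with |c| < 1, the definite integral ∫₀^π log(1 + c·cos θ) dθ equals π·log((1 + √(1 - c²))/2). -/
open Real

lemma quad_pos (r : ℝ) (hr : |r| < 1) (θ : ℝ) : 0 < 1 + 2 * r * Real.cos θ + r ^ 2 := by
  have h1 : |r * Real.cos θ| ≤ |r| := by
    rw [abs_mul]
    exact mul_le_of_le_one_right (abs_nonneg r) (Real.abs_cos_le_one θ)
  have h2 := (abs_le.mp h1).1
  have h3 := (abs_le.mp hr.le).1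
  nlinarith [sq_abs r, abs_nonneg r]

open Complex in
lemma integral_log_quad (r : ℝ) (hr : |r| < 1) :
    ∫ θ in (0:ℝ)..(2*π), Real.log (1 + 2 * r * Real.cos θ + r ^ 2) = 0 := by
  have hmem : ∀ z : ℂ, ‖z‖ ≤ 1 → (1 + (r : ℂ) * z) ∈ Complex.slitPlane := by
    intro z hz
    rw [Complex.mem_slitPlane_iff]
    left
    have hre : |z.re| ≤ 1 := (Complex.abs_re_le_norm z).trans hz
    have h1 : |r * z.re| ≤ |r| := by
      rw [abs_mul]; exact mul_le_of_le_one_right (abs_nonneg r) hre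
    have h2 := (abs_le.mp h1).1
    have h3 := (abs_le.mp hr.le).1
    simp only [Complex.add_re, Complex.one_re, Complex.mul_re, Complex.ofReal_re,
      Complex.ofReal_im, zero_mul, sub_zero]
    linarith
  have hd : ∀ z ∈ Metric.closedBall (0:ℂ) 1,
      DifferentiableAt ℂ (fun z => Complex.log (1 + (r : ℂ) * z)) z := by
    intro z hz
    have hz' : ‖z‖ ≤ 1 := by
      simpa [Metric.mem_closedBall, Complex.dist_eq] using hz
    exact ((differentiableAt_const _).add
      ((differentiableAt_const _).mul differentiableAt_id)).clog (hmem z hz')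
  have key := Complex.circleIntegral_sub_center_inv_smul_of_differentiable_on_off_countable
    (R := 1) (c := 0) (f := fun z => Complex.log (1 + (r : ℂ) * z)) (s := ∅) one_pos
    Set.countable_empty
    (fun z hz => (hd z hz).continuousAt.continuousWithinAt)
    (fun z hz => hd z (Metric.ball_subset_closedBall hz.1))
  simp only [mul_zero, add_zero, Complex.log_one, smul_zero] at key
  rw [circleIntegral] at key
  have hcm : ∀ θ : ℝ, circleMap 0 1 θ ≠ 0 := fun θ => by
    simp [circleMap, Complex.exp_ne_zero]
  have key2 : ∫ θ in (0:ℝ)..(2*π), Complex.log (1 + (r : ℂ) * circleMap 0 1 θ) = 0 := by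
    have heq : (∫ θ in (0:ℝ)..(2*π), deriv (circleMap 0 1) θ •
          (circleMap 0 1 θ - 0)⁻¹ • Complex.log (1 + (r : ℂ) * circleMap 0 1 θ))
        = ∫ θ in (0:ℝ)..(2*π),
          Complex.I * Complex.log (1 + (r : ℂ) * circleMap 0 1 θ) := by
      apply intervalIntegral.integral_congr
      intro θ _
      simp only [deriv_circleMap, sub_zero, smul_eq_mul]
      rw [mul_comm (circleMap 0 1 θ) Complex.I, mul_assoc, ← mul_assoc (circleMap 0 1 θ),
        mul_inv_cancel₀ (hcm θ), one_mul]
    rw [heq] at key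
    rw [intervalIntegral.integral_const_mul] at key
    simpa [Complex.I_ne_zero] using key
  -- continuity of the integrand
  have hcont : Continuous (fun θ : ℝ => Complex.log (1 + (r : ℂ) * circleMap 0 1 θ)) := by
    apply Continuous.clog
    · exact continuous_const.add (continuous_const.mul (continuous_circleMap 0 1))
    · intro θ
      exact hmem _ (by simp)
  have hint : IntervalIntegrable (fun θ : ℝ => Complex.log (1 + (r : ℂ) * circleMap 0 1 θ))
      MeasureTheory.volume 0 (2*π) := hcont.intervalIntegrable _ _
  have hre := Complex.reCLM.intervalIntegral_comp_comm hint
  rw [key2] at hre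
  simp only [Complex.reCLM_apply, map_zero] at hre
  -- now identify the real parts
  have habs : ∀ θ : ℝ, Real.log (1 + 2 * r * Real.cos θ + r ^ 2) =
      2 * (Complex.log (1 + (r : ℂ) * circleMap 0 1 θ)).re := by
    intro θ
    rw [Complex.log_re]
    have h2 : ‖1 + (r : ℂ) * circleMap 0 1 θ‖ ^ 2
        = 1 + 2 * r * Real.cos θ + r ^ 2 := by
      rw [Complex.sq_norm]
      simp only [Complex.normSq_apply, circleMap, zero_add, Complex.add_re, Complex.add_im,
        Complex.one_re, Complex.one_im, Complex.mul_re, Complex.mul_im, Complex.ofReal_re,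
        Complex.ofReal_im, Complex.ofReal_one, one_mul, zero_mul, sub_zero, zero_add]
      rw [show ((Complex.exp ((θ:ℂ) * Complex.I)).re) = Real.cos θ from by
            simp [Complex.exp_ofReal_mul_I_re],
          show ((Complex.exp ((θ:ℂ) * Complex.I)).im) = Real.sin θ from by
            simp [Complex.exp_ofReal_mul_I_im]]
      nlinarith [Real.sin_sq_add_cos_sq θ]
    rw [← h2, Real.log_pow]
    push_cast
    ring
  rw [intervalIntegral.integral_congr (g := fun θ =>
      2 * (Complex.log (1 + (r : ℂ) * circleMap 0 1 θ)).re) (fun θ _ => habs θ)]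
  rw [intervalIntegral.integral_const_mul, hre, mul_zero]

theorem integral_log_one_add_cos (c : ℝ) (hc : |c| < 1) :
    ∫ θ in (0:ℝ)..π, Real.log (1 + c * Real.cos θ)
      = π * Real.log ((1 + Real.sqrt (1 - c ^ 2)) / 2) := by
  have hc' := abs_lt.mp hc
  have hc1 : c ^ 2 < 1 := by nlinarith
  set s := Real.sqrt (1 - c ^ 2) with hs_def
  have hs0 : 0 < s := Real.sqrt_pos.mpr (by linarith)
  have hs2 : s ^ 2 = 1 - c ^ 2 := Real.sq_sqrt (by linarith)
  have h1s : (0:ℝ) < 1 + s := by linarith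
  set r := c / (1 + s) with hr_def
  have hr : |r| < 1 := by
    rw [hr_def, abs_div, abs_of_pos h1s, div_lt_one h1s]
    calc |c| < 1 := hc
    _ ≤ 1 + s := by linarith
  have h1r : (0:ℝ) < 1 + r ^ 2 := by positivity
  have hr2 : (1 + r ^ 2) * (1 + s) = 2 := by
    rw [hr_def]
    field_simp
    nlinarith
  have hcr : c * (1 + r ^ 2) = 2 * r := by
    rw [hr_def]
    field_simp
    linear_combination c * hs2
  have hposr := quad_pos r hr
  have hkey : ∀ θ : ℝ, Real.log (1 + c * Real.cos θ) =
      Real.log (1 + 2 * r * Real.cos θ + r ^ 2) - Real.log (1 + r ^ 2) := by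
    intro θ
    have hmul : (1 + 2 * r * Real.cos θ + r ^ 2) = (1 + c * Real.cos θ) * (1 + r ^ 2) := by
      linear_combination (- Real.cos θ) * hcr
    have hp1 : 0 < 1 + c * Real.cos θ := by
      have := hposr θ
      nlinarith
    rw [hmul, Real.log_mul hp1.ne' h1r.ne']
    ring
  have hcg : Continuous (fun θ : ℝ => Real.log (1 + 2 * r * Real.cos θ + r ^ 2)) :=
    Continuous.log (by continuity) (fun θ => (hposr θ).ne')
  have hsym : (∫ θ in π..(2*π), Real.log (1 + 2 * r * Real.cos θ + r ^ 2))
      = ∫ θ in (0:ℝ)..π, Real.log (1 + 2 * r * Real.cos θ + r ^ 2) := by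
    have h := intervalIntegral.integral_comp_sub_left (a := (0:ℝ)) (b := π)
      (f := fun θ => Real.log (1 + 2 * r * Real.cos θ + r ^ 2)) (2*π)
    rw [show 2*π - π = π from by ring, show 2*π - 0 = 2*π from by ring] at h
    rw [← h]
    apply intervalIntegral.integral_congr
    intro θ _
    simp [Real.cos_sub, Real.cos_two_pi, Real.sin_two_pi]
  have hhalf : (∫ θ in (0:ℝ)..π, Real.log (1 + 2 * r * Real.cos θ + r ^ 2)) = 0 := by
    have hsplit := intervalIntegral.integral_add_adjacent_intervals
      (a := (0:ℝ)) (b := π) (c := 2*π) (μ := MeasureTheory.volume)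
      (hcg.intervalIntegrable _ _) (hcg.intervalIntegrable _ _)
    rw [integral_log_quad r hr, hsym] at hsplit
    linarith
  rw [intervalIntegral.integral_congr (g := fun θ =>
      Real.log (1 + 2 * r * Real.cos θ + r ^ 2) - Real.log (1 + r ^ 2)) (fun θ _ => hkey θ)]
  rw [intervalIntegral.integral_sub (hcg.intervalIntegrable _ _) intervalIntegrable_const,
    hhalf, intervalIntegral.integral_const]
  have hlog : Real.log ((1 + s) / 2) = - Real.log (1 + r ^ 2) := by
    rw [show (1 + s) / 2 = (1 + r ^ 2)⁻¹ from by
      field_simp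
      linarith [hr2], Real.log_inv]
  rw [hlog]
  simp only [smul_eq_mul, sub_zero, zero_sub]
  ring
end

section
/- Let θ be uniformly distributed on [0, 2π]. For all complex x, y, the expectation E[log(1 + |x + e^{iθ} y|²)] equals log((1 + a + √((1+a)² − b²))/2), where a = |x|² + |y|² and b = 2|x||y|. -/
open Real MeasureTheory

open Metric Complex intervalIntegral in
lemma log_abs_one_add_circle (c : ℂ) (hc : ‖c‖ < 1) :
    ∫ θ in (0:ℝ)..(2 * π),
      Real.log (‖1 + c * Complex.exp (θ * Complex.I)‖) = 0 := by
  set f : ℂ → ℂ := fun z => Complex.log (1 + c * z) with hf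
  have hne : ∀ z : ℂ, ‖z‖ ≤ 1 → 0 < (1 + c * z).re := by
    intro z hz
    have h1 : ‖c * z‖ < 1 := by
      rw [norm_mul]
      calc ‖c‖ * ‖z‖ ≤ ‖c‖ * 1 := by
            exact mul_le_mul_of_nonneg_left hz (norm_nonneg c)
        _ < 1 := by simpa using hc
    have h2 : |(c * z).re| < 1 := lt_of_le_of_lt (Complex.abs_re_le_norm _) h1
    have : (1 + c * z).re = 1 + (c * z).re := by simp
    rw [this]
    cases abs_lt.mp h2 with
    | intro hl hr => linarith
  have hdiff : DifferentiableOn ℂ f (closedBall 0 1) := by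
    intro z hz
    have hz1 : ‖z‖ ≤ 1 := by simpa [Complex.dist_eq] using mem_closedBall.mp hz
    refine DifferentiableAt.differentiableWithinAt ?_
    have h1 : DifferentiableAt ℂ (fun z : ℂ => 1 + c * z) z := by fun_prop
    exact (Complex.differentiableAt_log (Or.inl (hne z hz1))).comp z h1
  have hcauchy := hdiff.circleIntegral_sub_inv_smul (w := 0) (by simp)
  have hf0 : f 0 = 0 := by simp [hf]
  rw [hf0, smul_zero] at hcauchy
  rw [circleIntegral] at hcauchy
  simp only [deriv_circleMap, circleMap_zero, sub_zero, smul_eq_mul, Complex.ofReal_one,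
    one_mul] at hcauchy
  have key : ∫ θ in (0:ℝ)..(2 * π), f (Complex.exp (θ * Complex.I)) = 0 := by
    have hexp : ∀ θ : ℝ, (Complex.exp (θ * Complex.I) * Complex.I) *
        ((Complex.exp (θ * Complex.I))⁻¹ * f (Complex.exp (θ * Complex.I)))
          = Complex.I * f (Complex.exp (θ * Complex.I)) := by
      intro θ
      have : Complex.exp (θ * Complex.I) ≠ 0 := Complex.exp_ne_zero _
      field_simp
    rw [show (fun θ : ℝ => (Complex.exp (↑θ * Complex.I) * Complex.I) *
        ((Complex.exp (↑θ * Complex.I))⁻¹ * f (Complex.exp (↑θ * Complex.I))))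
        = fun θ : ℝ => Complex.I * f (Complex.exp (↑θ * Complex.I)) from funext hexp,
      intervalIntegral.integral_const_mul] at hcauchy
    exact (mul_eq_zero.mp hcauchy).resolve_left Complex.I_ne_zero
  -- pass to real parts
  have hcont : Continuous fun θ : ℝ => f (Complex.exp (↑θ * Complex.I)) := by
    apply continuous_iff_continuousAt.mpr
    intro θ
    have h1 : Continuous fun θ : ℝ => 1 + c * Complex.exp (↑θ * Complex.I) := by fun_prop
    have h2 : ‖Complex.exp ((θ:ℝ) * Complex.I)‖ ≤ 1 := by
      rw [Complex.norm_exp_ofReal_mul_I]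
    exact h1.continuousAt.clog (Or.inl (hne _ h2))
  have hint : IntervalIntegrable (fun θ : ℝ => f (Complex.exp (↑θ * Complex.I)))
      volume 0 (2 * π) := hcont.intervalIntegrable _ _
  have hre := Complex.reCLM.intervalIntegral_comp_comm hint
  rw [key] at hre
  simp only [Complex.reCLM_apply] at hre
  have heq : ∀ θ : ℝ, (f (Complex.exp (↑θ * Complex.I))).re
      = Real.log (‖1 + c * Complex.exp (↑θ * Complex.I)‖) := by
    intro θ; simp [hf, Complex.log_re]
  rw [show (fun θ : ℝ => (f (Complex.exp (↑θ * Complex.I))).re)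
      = fun θ : ℝ => Real.log (‖1 + c * Complex.exp (↑θ * Complex.I)‖)
      from funext heq] at hre
  simpa using hre

lemma integral_log_quadratic (α β : ℝ) (hα : 0 < α) (hβ : 0 ≤ β) (hβα : β < α) :
    ∫ θ in (0:ℝ)..(2 * π), Real.log (α^2 + β^2 + 2*α*β*Real.cos θ)
      = 2 * π * Real.log (α^2) := by
  set c : ℂ := ((β / α : ℝ) : ℂ) with hc
  have hcabs : ‖c‖ < 1 := by
    rw [hc, Complex.norm_real, Real.norm_eq_abs, _root_.abs_of_nonneg (div_nonneg hβ hα.le), div_lt_one hα]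
    exact hβα
  have habs1 : ∀ θ : ℝ, ‖1 + c * Complex.exp (θ * Complex.I)‖ ≠ 0 := by
    intro θ
    have h2 : ‖c * Complex.exp (θ * Complex.I)‖ < 1 := by
      rw [norm_mul, Complex.norm_exp_ofReal_mul_I, mul_one]; exact hcabs
    intro h0
    have : (1 : ℂ) + c * Complex.exp (θ * Complex.I) = 0 := by
      simpa using norm_eq_zero.mp h0
    have : c * Complex.exp (θ * Complex.I) = -1 := by linear_combination this
    rw [this] at h2; simp at h2
  have key : ∀ θ : ℝ, Real.log (α^2 + β^2 + 2*α*β*Real.cos θ)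
      = 2 * Real.log α + 2 * Real.log (‖1 + c * Complex.exp (θ * Complex.I)‖) := by
    intro θ
    have hz : ((α:ℂ) + (β:ℝ) * Complex.exp (θ * Complex.I))
        = (α:ℝ) * (1 + c * Complex.exp (θ * Complex.I)) := by
      have hα' : (α:ℂ) ≠ 0 := by exact_mod_cast hα.ne'
      rw [hc]; push_cast; field_simp
    have hsq : α^2 + β^2 + 2*α*β*Real.cos θ
        = (‖(α:ℂ) + (β:ℝ) * Complex.exp (θ * Complex.I)‖)^2 := by
      rw [Complex.sq_norm, Complex.normSq_add, Complex.normSq_ofReal]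
      have h1 : Complex.normSq ((β:ℂ) * Complex.exp (θ * Complex.I)) = β * β := by
        rw [Complex.normSq_mul, Complex.normSq_ofReal, Complex.normSq_eq_norm_sq,
          Complex.norm_exp_ofReal_mul_I]
        ring
      have h2 : ((α:ℂ) * (starRingEnd ℂ) ((β:ℝ) * Complex.exp (θ * Complex.I))).re
          = α * β * Real.cos θ := by
        rw [map_mul, Complex.conj_ofReal, ← Complex.exp_conj]
        rw [show (starRingEnd ℂ) ((θ:ℝ) * Complex.I) = ((-θ : ℝ) : ℂ) * Complex.I by simp]
        rw [show (α:ℂ) * ((β:ℂ) * Complex.exp (((-θ:ℝ):ℂ) * Complex.I))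
            = ((α * β : ℝ) : ℂ) * Complex.exp (((-θ:ℝ):ℂ) * Complex.I) by push_cast; ring]
        rw [Complex.re_ofReal_mul, Complex.exp_ofReal_mul_I_re, Real.cos_neg]
      rw [h1, h2]; ring
    rw [hsq, Real.log_pow, hz, norm_mul, Complex.norm_real, Real.norm_eq_abs, abs_of_pos hα,
      Real.log_mul (ne_of_gt hα) (habs1 θ)]
    push_cast; ring
  rw [intervalIntegral.integral_congr (g := fun θ : ℝ => 2 * Real.log α
      + 2 * Real.log (‖1 + c * Complex.exp (θ * Complex.I)‖))
      (fun θ _ => key θ)]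
  have hcont : Continuous fun θ : ℝ =>
      Real.log (‖1 + c * Complex.exp (θ * Complex.I)‖) := by
    have h1 : Continuous fun θ : ℝ => ‖1 + c * Complex.exp (θ * Complex.I)‖ :=
      continuous_norm.comp (by fun_prop)
    exact h1.log habs1
  rw [intervalIntegral.integral_add (intervalIntegrable_const)
      ((show Continuous fun θ : ℝ => (2:ℝ) * Real.log (‖1 + c * Complex.exp (θ * Complex.I)‖) from
        continuous_const.mul hcont).intervalIntegrable _ _),
    intervalIntegral.integral_const]
  have h2 : (∫ x in (0:ℝ)..(2*π),
      2 * Real.log (‖1 + c * Complex.exp (x * Complex.I)‖)) = 0 := by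
    rw [intervalIntegral.integral_const_mul, log_abs_one_add_circle c hcabs]; ring
  rw [h2]
  simp only [Real.log_pow, smul_eq_mul, mul_zero, add_zero, sub_zero]
  push_cast; ring

/-- For `θ` uniformly distributed on `[0, 2π]`,
`E[log(1 + |x + e^{iθ} y|²)] = log((1 + a + √((1+a)² − b²))/2)`
where `a = |x|² + |y|²` and `b = 2|x||y|`. -/
theorem expectation_log_one_add_sq_abs (x y : ℂ) :
    (∫ θ in (0:ℝ)..(2 * π),
        Real.log (1 + ‖x + Complex.exp (θ * Complex.I) * y‖ ^ 2)) / (2 * π)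
      = Real.log ((1 + (‖x‖ ^ 2 + ‖y‖ ^ 2)
          + Real.sqrt ((1 + (‖x‖ ^ 2 + ‖y‖ ^ 2)) ^ 2
              - (2 * ‖x‖ * ‖y‖) ^ 2)) / 2) := by
  set r : ℝ := ‖x‖ with hr
  set s : ℝ := ‖y‖ with hs
  have hr0 : 0 ≤ r := norm_nonneg x
  have hs0 : 0 ≤ s := norm_nonneg y
  set d : ℂ := x * (starRingEnd ℂ) y with hd
  set ψ : ℝ := d.arg with hψ
  set G : ℝ → ℝ := fun t => Real.log (1 + r^2 + s^2 + 2*r*s*Real.cos t) with hG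
  -- Step 1: pointwise identity
  have step1 : ∀ θ : ℝ, 1 + ‖x + Complex.exp (θ * Complex.I) * y‖ ^ 2
      = 1 + r^2 + s^2 + 2*r*s*Real.cos (θ - ψ) := by
    intro θ
    rw [Complex.sq_norm, Complex.normSq_add]
    have h1 : Complex.normSq (Complex.exp (θ * Complex.I) * y) = s^2 := by
      rw [Complex.normSq_mul, Complex.normSq_eq_norm_sq, Complex.normSq_eq_norm_sq,
        Complex.norm_exp_ofReal_mul_I]
      simp [hs]
    have hdval : d = ((r * s : ℝ) : ℂ) * Complex.exp ((ψ:ℝ) * Complex.I) := by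
      have habs : ‖d‖ = r * s := by rw [hd, norm_mul, Complex.norm_conj, ← hr, ← hs]
      rw [hψ, ← habs]
      exact (Complex.norm_mul_exp_arg_mul_I d).symm
    have h2 : (x * (starRingEnd ℂ) (Complex.exp (θ * Complex.I) * y)).re
        = r*s*Real.cos (θ - ψ) := by
      have hc : (starRingEnd ℂ) (Complex.exp ((θ:ℝ) * Complex.I))
          = Complex.exp (((-θ : ℝ) : ℂ) * Complex.I) := by
        rw [← Complex.exp_conj]
        congr 1
        simp
      rw [map_mul, hc, show x * (Complex.exp (((-θ:ℝ):ℂ) * Complex.I) * (starRingEnd ℂ) y)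
          = d * Complex.exp (((-θ:ℝ):ℂ) * Complex.I) by rw [hd]; ring,
        hdval, mul_assoc, ← Complex.exp_add,
        show ((ψ:ℝ):ℂ) * Complex.I + ((-θ:ℝ):ℂ) * Complex.I = ((ψ - θ : ℝ):ℂ) * Complex.I by
          push_cast; ring,
        Complex.re_ofReal_mul, Complex.exp_ofReal_mul_I_re]
      rw [show θ - ψ = -(ψ - θ) by ring, Real.cos_neg]
    rw [h1, h2, Complex.normSq_eq_norm_sq, ← hr]
    ring
  -- Step 2: shift the integral
  have hGcont : Continuous G := by
    have hpos : ∀ t : ℝ, (0:ℝ) < 1 + r^2 + s^2 + 2*r*s*Real.cos t := by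
      intro t
      nlinarith [Real.neg_one_le_cos t, Real.cos_le_one t, sq_nonneg (r - s), sq_nonneg (r + s),
        mul_nonneg hr0 hs0]
    have h1 : Continuous fun t : ℝ => 1 + r^2 + s^2 + 2*r*s*Real.cos t := by fun_prop
    exact h1.log fun t => (hpos t).ne'
  have step2 : (∫ θ in (0:ℝ)..(2 * π),
      Real.log (1 + ‖x + Complex.exp (θ * Complex.I) * y‖ ^ 2))
      = ∫ θ in (0:ℝ)..(2 * π), G θ := by
    have e1 : (∫ θ in (0:ℝ)..(2 * π),
        Real.log (1 + ‖x + Complex.exp (θ * Complex.I) * y‖ ^ 2))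
        = ∫ θ in (0:ℝ)..(2 * π), G (θ - ψ) := by
      apply intervalIntegral.integral_congr
      intro θ _
      rw [hG]; simp only []
      rw [step1 θ]
    rw [e1, intervalIntegral.integral_comp_sub_right G ψ]
    have hper : Function.Periodic G (2 * π) := by
      intro t
      simp only [hG, Real.cos_add_two_pi]
    have := hper.intervalIntegral_add_eq (0 - ψ) 0
    rw [show (0:ℝ) - ψ + 2 * π = 2 * π - ψ by ring] at this
    rw [this, zero_add]
  -- Step 3: the explicit values
  set u : ℝ := Real.sqrt (1 + (r + s)^2) with hu
  set v : ℝ := Real.sqrt (1 + (r - s)^2) with hv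
  have hu2 : u^2 = 1 + (r + s)^2 := Real.sq_sqrt (by positivity)
  have hv2 : v^2 = 1 + (r - s)^2 := Real.sq_sqrt (by positivity)
  have hu0 : 0 < u := Real.sqrt_pos.mpr (by positivity)
  have hv0 : 0 < v := Real.sqrt_pos.mpr (by positivity)
  have hvu : v ≤ u := by
    apply Real.sqrt_le_sqrt
    nlinarith [mul_nonneg hr0 hs0]
  set α : ℝ := (u + v) / 2 with hα
  set β : ℝ := (u - v) / 2 with hβ
  have hα0 : 0 < α := by positivity
  have hβ0 : 0 ≤ β := by simp [hβ]; linarith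
  have hβα : β < α := by rw [hα, hβ]; linarith
  have hid1 : α^2 + β^2 = 1 + r^2 + s^2 := by
    rw [hα, hβ]; linear_combination (1/2 : ℝ) * hu2 + (1/2 : ℝ) * hv2
  have hid2 : α * β = r * s := by
    rw [hα, hβ]; linear_combination (1/4 : ℝ) * hu2 - (1/4 : ℝ) * hv2
  have step3 : (∫ θ in (0:ℝ)..(2 * π), G θ) = 2 * π * Real.log (α^2) := by
    rw [← integral_log_quadratic α β hα0 hβ0 hβα]
    apply intervalIntegral.integral_congr
    intro θ _
    rw [hG]; simp only []
    have e : (1:ℝ) + r^2 + s^2 + 2*r*s*Real.cos θ = α^2 + β^2 + 2*α*β*Real.cos θ := by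
      linear_combination hid1.symm + 2 * Real.cos θ * hid2.symm
    rw [e]
  -- Step 4: the RHS equals log (α^2)
  have hsqrt : Real.sqrt ((1 + (r^2 + s^2))^2 - (2*r*s)^2) = u * v := by
    rw [show (1 + (r^2 + s^2))^2 - (2*r*s)^2 = (u*v)^2 by
      linear_combination (-(v^2) : ℝ) * hu2 + (-(1 + (r+s)^2) : ℝ) * hv2]
    exact Real.sqrt_sq (by positivity)
  have hrhs : (1 + (r^2 + s^2) + Real.sqrt ((1 + (r^2+s^2))^2 - (2*r*s)^2)) / 2 = α^2 := by
    rw [hsqrt, hα]; linear_combination (-(1:ℝ)/4) * hu2 + (-(1:ℝ)/4) * hv2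
  rw [step2, step3, hrhs]
  exact mul_div_cancel_left₀ _ (by positivity)
end

section
/- Fix x ∈ ℂ. The function f : ℝ₊ → ℝ defined by f(s) = log((1 + a + √((1+a)² − b²))/2), where a = |x|² + s and b = 2|x|√s, is strictly increasing on [0, ∞). -/
open Real Set

/-- For fixed `x ∈ ℂ`, the function
`s ↦ log((1 + a + √((1+a)² − b²))/2)` with `a = |x|² + s`, `b = 2|x|√s`
is strictly increasing on `[0, ∞)`. -/
theorem strictMonoOn_effective_rate (x : ℂ) :
    StrictMonoOn
      (fun s : ℝ =>
        Real.log ((1 + (‖x‖ ^ 2 + s)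
          + Real.sqrt ((1 + (‖x‖ ^ 2 + s)) ^ 2
              - (2 * ‖x‖ * Real.sqrt s) ^ 2)) / 2))
      (Set.Ici (0 : ℝ)) := by
  set r := ‖x‖ with hr
  have hr0 : (0:ℝ) ≤ r := norm_nonneg x
  intro s hs t ht hst
  simp only [mem_Ici] at hs ht
  have harg : ∀ u : ℝ, 0 ≤ u → (1 + (r^2 + u))^2 - (2*r*Real.sqrt u)^2
      = (u + 1 - r^2)^2 + 4*r^2 := by
    intro u hu
    have h := Real.sq_sqrt hu
    nlinarith [h]
  simp only
  rw [harg s hs, harg t ht]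
  set Ds := (s + 1 - r^2)^2 + 4*r^2 with hDs
  set Dt := (t + 1 - r^2)^2 + 4*r^2 with hDt
  have hDs0 : 0 ≤ Ds := by positivity
  have hDt0 : 0 ≤ Dt := by positivity
  have hsDs : Real.sqrt Ds ^ 2 = Ds := Real.sq_sqrt hDs0
  have hsDt : Real.sqrt Dt ^ 2 = Dt := Real.sq_sqrt hDt0
  have hsDs0 : 0 ≤ Real.sqrt Ds := Real.sqrt_nonneg _
  have hsDt0 : 0 ≤ Real.sqrt Dt := Real.sqrt_nonneg _
  -- key fact: √Dt + (t + 1 - r²) > 0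
  have key : 0 < Real.sqrt Dt + (t + 1 - r^2) := by
    rcases eq_or_lt_of_le hr0 with h0 | h0
    · have : Dt = (t+1)^2 := by rw [hDt, ← h0]; ring
      have hr2 : r^2 = 0 := by rw [← h0]; ring
      rw [this, Real.sqrt_sq (by linarith)]
      linarith
    · have hlt : ((r^2 - 1 - t)^2 : ℝ) < Dt := by
        rw [hDt]; nlinarith
      have := Real.sqrt_lt_sqrt (sq_nonneg _) hlt
      rw [Real.sqrt_sq_eq_abs] at this
      have habs : r^2 - 1 - t ≤ |r^2 - 1 - t| := le_abs_self _
      linarith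
  -- main inequality: √Ds < (t - s) + √Dt
  have main : Real.sqrt Ds < (t - s) + Real.sqrt Dt := by
    have hL : 0 < (t - s) + Real.sqrt Dt := by linarith
    have hsq : Ds < ((t - s) + Real.sqrt Dt)^2 := by nlinarith
    calc Real.sqrt Ds < Real.sqrt (((t - s) + Real.sqrt Dt)^2) :=
          Real.sqrt_lt_sqrt hDs0 hsq
      _ = (t - s) + Real.sqrt Dt := Real.sqrt_sq hL.le
  apply Real.log_lt_log
  · positivity
  · linarith
end

section
/- Let P > 0 and let {θ_l} be i.i.d. random variables uniform on [0, 2π]. Define R̄(i) = E[log(1 + |∑_{l=1}^{i} e^{iθ_l}|² P)] for i ≥ 0. Then the sequence R̄ is strictly increasing: R̄(i+1) > R̄(i) for every i ≥ 0. -/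
open Real MeasureTheory ProbabilityTheory

lemma one_add_pos_re (r : ℝ) (h0 : 0 ≤ r) (h1 : r < 1) (φ : ℝ) :
    (0:ℝ) < (1 + (r:ℂ) * Complex.exp (φ * Complex.I)).re := by
  have habs : ‖(r:ℂ) * Complex.exp (φ * Complex.I)‖ = r := by
    rw [norm_mul, Complex.norm_real, Complex.norm_exp_ofReal_mul_I, Real.norm_eq_abs, abs_of_nonneg h0, mul_one]
  have h2 := Complex.abs_re_le_norm ((r:ℂ) * Complex.exp (φ * Complex.I))
  rw [habs] at h2
  have h3 := abs_le.1 h2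
  simp only [Complex.add_re, Complex.one_re]
  linarith [h3.1]

lemma circle_log_C (r : ℝ) (h0 : 0 < r) (h1 : r < 1) :
    ∫ φ in (0:ℝ)..(2*π), Complex.log (1 + r * Complex.exp (φ * Complex.I)) = 0 := by
  have hd : DiffContOnCl ℂ (fun z => Complex.log (1 + z)) (Metric.ball 0 r) := by
    apply DifferentiableOn.diffContOnCl
    rw [closure_ball 0 h0.ne']
    intro z hz
    apply DifferentiableAt.differentiableWithinAt
    have hre : (0:ℝ) < (1 + z).re := by
      simp only [Metric.mem_closedBall, Complex.dist_eq, sub_zero] at hz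
      have : |z.re| ≤ r := le_trans (Complex.abs_re_le_norm z) hz
      have h3 := abs_le.1 this
      simp only [Complex.add_re, Complex.one_re]
      linarith [h3.1]
    exact (Complex.differentiableAt_log (Or.inl hre)).comp z
      (differentiableAt_const _ |>.add differentiableAt_id)
  have h := hd.circleIntegral_sub_inv_smul (w := 0) (by simpa using h0)
  rw [circleIntegral] at h
  simp only [deriv_circleMap, circleMap, zero_add, sub_zero] at h
  have h2 : ∀ φ : ℝ, ((r:ℂ) * Complex.exp (φ * Complex.I) * Complex.I) •
      (((r:ℂ) * Complex.exp (φ * Complex.I))⁻¹ • Complex.log (1 + r * Complex.exp (φ * Complex.I)))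
      = Complex.I * Complex.log (1 + r * Complex.exp (φ * Complex.I)) := by
    intro φ
    have hne : (r:ℂ) * Complex.exp (φ * Complex.I) ≠ 0 := by
      simp [Complex.exp_ne_zero, h0.ne']
    rw [smul_eq_mul, smul_eq_mul, mul_comm ((r:ℂ) * Complex.exp (φ * Complex.I)) Complex.I,
      mul_assoc Complex.I, mul_inv_cancel_left₀ hne]
  rw [intervalIntegral.integral_congr (fun φ _ => h2 φ)] at h
  rw [intervalIntegral.integral_const_mul] at h
  simpa [Complex.I_ne_zero] using h

lemma circle_log_R (r : ℝ) (h0 : 0 < r) (h1 : r < 1) :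
    ∫ φ in (0:ℝ)..(2*π), Real.log (‖1 + r * Complex.exp (φ * Complex.I)‖) = 0 := by
  have hcont : Continuous (fun φ : ℝ => Complex.log (1 + r * Complex.exp (φ * Complex.I))) := by
    rw [continuous_iff_continuousAt]
    intro φ
    apply ContinuousAt.clog (by fun_prop)
    exact Or.inl (one_add_pos_re r h0.le h1 φ)
  have key := circle_log_C r h0 h1
  have h2 := ((Complex.reCLM.intervalIntegral_comp_comm
    (hcont.intervalIntegrable 0 (2*π) : IntervalIntegrable _ volume 0 (2*π)))).symm
  rw [key] at h2
  simp only [Complex.reCLM_apply, map_zero] at h2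
  rw [show (∫ φ in (0:ℝ)..(2*π), Real.log (‖1 + r * Complex.exp (φ * Complex.I)‖))
      = ∫ φ in (0:ℝ)..(2*π), (Complex.log (1 + r * Complex.exp (φ * Complex.I))).re from
    intervalIntegral.integral_congr (fun φ _ => (Complex.log_re _).symm), ← h2]




lemma abs_add_exp_sq (x y φ : ℝ) :
    ‖(x:ℂ) + y * Complex.exp (φ * Complex.I)‖^2
      = x^2 + y^2 + 2*x*y*Real.cos φ := by
  rw [Complex.sq_norm, Complex.normSq_apply]
  simp only [Complex.add_re, Complex.add_im, Complex.ofReal_re, Complex.ofReal_im,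
    Complex.mul_re, Complex.mul_im, Complex.exp_ofReal_mul_I_re, Complex.exp_ofReal_mul_I_im]
  nlinarith [Real.sin_sq_add_cos_sq φ]

lemma key_cos (A B α β : ℝ) (hαpos : 0 < α) (hβpos : 0 < β) (hβα : β < α)
    (hsum : α^2 + β^2 = A) (hprod : 2*α*β = B) :
    ∫ φ in (0:ℝ)..(2*π), Real.log (A + B * Real.cos φ) = 2*π * Real.log (α^2) := by
  set r : ℝ := β/α with hr
  have hr0 : 0 < r := by positivity
  have hr1 : r < 1 := (div_lt_one hαpos).2 hβα
  have hpt : ∀ φ : ℝ, Real.log (A + B * Real.cos φ)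
      = 2 * Real.log α + 2 * Real.log (‖1 + r * Complex.exp (φ * Complex.I)‖) := by
    intro φ
    have habs2 : ‖(α:ℂ) + β * Complex.exp (φ * Complex.I)‖^2
        = A + B * Real.cos φ := by rw [abs_add_exp_sq, ← hsum, ← hprod]; try ring
    have hsplit : (α:ℂ) + β * Complex.exp (φ * Complex.I)
        = (α:ℂ) * (1 + r * Complex.exp (φ * Complex.I)) := by
      have hc : (r:ℂ) = (β:ℂ)/(α:ℂ) := by rw [hr, Complex.ofReal_div]
      have hαne : (α:ℂ) ≠ 0 := by exact_mod_cast hαpos.ne'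
      rw [hc]; field_simp
    have hne2 : ‖1 + r * Complex.exp (φ * Complex.I)‖ ≠ 0 := by
      intro h
      have := one_add_pos_re r hr0.le hr1 φ
      rw [norm_eq_zero.1 h] at this
      simp at this
    calc Real.log (A + B * Real.cos φ)
        = Real.log (‖(α:ℂ) + β * Complex.exp (φ * Complex.I)‖^2) := by rw [habs2]
      _ = 2 * Real.log (‖(α:ℂ) + β * Complex.exp (φ * Complex.I)‖) := by
          rw [Real.log_pow]; push_cast; ring
      _ = 2 * Real.log (α * ‖1 + r * Complex.exp (φ * Complex.I)‖) := by
          rw [hsplit, norm_mul, Complex.norm_real, Real.norm_eq_abs, abs_of_pos hαpos]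
      _ = 2 * Real.log α + 2 * Real.log (‖1 + r * Complex.exp (φ * Complex.I)‖) := by
          rw [Real.log_mul hαpos.ne' hne2]; ring
  rw [intervalIntegral.integral_congr (fun φ _ => hpt φ)]
  have hcont : Continuous
      (fun φ : ℝ => Real.log (‖1 + r * Complex.exp (φ * Complex.I)‖)) := by
    rw [continuous_iff_continuousAt]
    intro φ
    apply ContinuousAt.log (continuous_norm.continuousAt.comp (by fun_prop))
    intro h
    have h2 := one_add_pos_re r hr0.le hr1 φ
    have h' : (1 + (r:ℂ) * Complex.exp (φ * Complex.I)) = 0 :=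
      norm_eq_zero.1 (by simpa using h)
    rw [h'] at h2
    simp at h2
  rw [intervalIntegral.integral_add (intervalIntegrable_const)
    ((hcont.intervalIntegrable 0 (2*π)).const_mul 2),
    intervalIntegral.integral_const_mul, intervalIntegral.integral_const_mul,
    circle_log_R r hr0 hr1, intervalIntegral.integral_const]
  simp only [smul_eq_mul, mul_zero, add_zero, sub_zero]
  rw [Real.log_pow]
  push_cast
  ring

noncomputable def Mv (P a : ℝ) : ℝ :=
  ((1 + P*(a^2+1)) + Real.sqrt ((1 + P*(a^2+1))^2 - (2*P*a)^2))/2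



lemma key_real (P : ℝ) (hP : 0 < P) (a : ℝ) (ha : 0 < a) :
    ∫ φ in (0:ℝ)..(2*π),
        Real.log (1 + ‖(a:ℂ) + Complex.exp (φ * Complex.I)‖^2 * P)
      = 2*π * Real.log (Mv P a) := by
  have hAB : 2*P*a + 1 ≤ 1 + P*(a^2+1) := by nlinarith [sq_nonneg (a-1)]
  have hBpos : 0 < 2*P*a := by positivity
  have hD : 0 < (1 + P*(a^2+1))^2 - (2*P*a)^2 := by nlinarith
  have hDsq : Real.sqrt ((1 + P*(a^2+1))^2 - (2*P*a)^2)^2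
      = (1 + P*(a^2+1))^2 - (2*P*a)^2 := Real.sq_sqrt hD.le
  have hDpos : 0 < Real.sqrt ((1 + P*(a^2+1))^2 - (2*P*a)^2) := Real.sqrt_pos.2 hD
  have hDA : Real.sqrt ((1 + P*(a^2+1))^2 - (2*P*a)^2) < 1 + P*(a^2+1) := by
    nlinarith [hDsq, hDpos]
  set D := Real.sqrt ((1 + P*(a^2+1))^2 - (2*P*a)^2) with hDdef
  have hMpos : 0 < ((1 + P*(a^2+1)) + D)/2 := by linarith
  have hmpos : 0 < ((1 + P*(a^2+1)) - D)/2 := by linarith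
  set α := Real.sqrt (((1 + P*(a^2+1)) + D)/2) with hαdef
  set β := Real.sqrt (((1 + P*(a^2+1)) - D)/2) with hβdef
  have hαpos : 0 < α := Real.sqrt_pos.2 hMpos
  have hβpos : 0 < β := Real.sqrt_pos.2 hmpos
  have hβα : β < α := Real.sqrt_lt_sqrt hmpos.le (by linarith)
  have hα2 : α^2 = ((1 + P*(a^2+1)) + D)/2 := Real.sq_sqrt hMpos.le
  have hβ2 : β^2 = ((1 + P*(a^2+1)) - D)/2 := Real.sq_sqrt hmpos.le
  have hsum : α^2 + β^2 = 1 + P*(a^2+1) := by rw [hα2, hβ2]; ring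
  have hprod : 2*α*β = 2*P*a := by
    have h2 : α*β = P*a := by
      rw [hαdef, hβdef, ← Real.sqrt_mul hMpos.le,
        show ((1 + P*(a^2+1)) + D)/2 * (((1 + P*(a^2+1)) - D)/2) = (P*a)^2 by
          linear_combination (-1/4 : ℝ) * hDsq,
        Real.sqrt_sq (by positivity)]
    linarith [h2]
  have hpt : ∀ φ : ℝ, (1 : ℝ) + ‖(a:ℂ) + Complex.exp (φ * Complex.I)‖^2 * P
      = (1 + P*(a^2+1)) + (2*P*a) * Real.cos φ := by
    intro φ
    have h := abs_add_exp_sq a 1 φ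
    have : ((a:ℂ) + Complex.exp (φ * Complex.I)) = ((a:ℂ) + (1:ℝ) * Complex.exp (φ * Complex.I)) := by
      push_cast; ring
    rw [this, h]
    ring
  rw [intervalIntegral.integral_congr (fun φ _ => by rw [hpt φ])]
  rw [key_cos _ _ α β hαpos hβpos hβα hsum hprod, hα2]
  rfl

lemma Mv_ge (P : ℝ) (hP : 0 < P) (a : ℝ) :
    (1 + a^2*P) * (1 + P/(1+a^2*P)^2) ≤ Mv P a := by
  have hu1 : 1 ≤ 1 + a^2*P := by nlinarith [sq_nonneg a]
  have hu0 : (0:ℝ) < 1 + a^2*P := by linarith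
  set u := 1 + a^2*P with hu
  set w := P/u with hw
  have hwu : w * u = P := by rw [hw]; field_simp
  have hwpos : 0 < w := by positivity
  have hB2 : (2*P*a)^2 = 4*P*(u-1) := by rw [hu]; ring
  have hA : 1 + P*(a^2+1) = u + P := by rw [hu]; ring
  have hkey : u - P + 2*w ≤ Real.sqrt ((u+P)^2 - 4*P*(u-1)) := by
    rcases le_or_gt (u - P + 2*w) 0 with h|h
    · exact le_trans h (Real.sqrt_nonneg _)
    · rw [Real.le_sqrt' h]
      nlinarith [hwu, hwpos, hu1, sq_nonneg w]
  have hgoal : u * (1 + P/u^2) = u + w := by rw [hw]; field_simp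
  rw [hgoal, Mv, hA, hB2]
  linarith [hkey]

lemma key_complex (P : ℝ) (hP : 0 < P) (s : ℂ) :
    ∫ φ in (0:ℝ)..(2*π),
        Real.log (1 + ‖s + Complex.exp (φ * Complex.I)‖^2 * P)
      = 2*π * Real.log (Mv P (‖s‖)) := by
  rcases eq_or_ne s 0 with rfl | hs
  · have hpt : ∀ φ : ℝ, Real.log (1 + ‖(0:ℂ) + Complex.exp (φ * Complex.I)‖^2 * P)
        = Real.log (1 + P) := by
      intro φ
      rw [zero_add, Complex.norm_exp_ofReal_mul_I]
      norm_num
    rw [intervalIntegral.integral_congr (fun φ _ => hpt φ),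
      intervalIntegral.integral_const]
    have : Mv P (‖(0:ℂ)‖) = 1 + P := by
      rw [Mv]
      simp only [norm_zero]
      rw [show (2*P*0 : ℝ)^2 = 0 by ring]
      rw [sub_zero, Real.sqrt_sq (by positivity)]
      ring
    rw [this]
    simp
    try ring
  · have ha : 0 < ‖s‖ := norm_pos_iff.mpr hs
    have hrot : ∀ φ : ℝ, ‖s + Complex.exp (φ * Complex.I)‖
        = ‖((‖s‖ : ℝ):ℂ) + Complex.exp (((φ - Complex.arg s : ℝ):ℂ) * Complex.I)‖ := by
      intro φ
      have hfac : s + Complex.exp (φ * Complex.I)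
          = Complex.exp (Complex.arg s * Complex.I)
            * (((‖s‖ : ℝ):ℂ) + Complex.exp (((φ - Complex.arg s : ℝ):ℂ) * Complex.I)) := by
        rw [mul_add, ← Complex.exp_add]
        congr 1
        · rw [mul_comm]; exact (Complex.norm_mul_exp_arg_mul_I s).symm
        · congr 1; push_cast; ring
      rw [hfac, norm_mul, Complex.norm_exp_ofReal_mul_I, one_mul]
    rw [intervalIntegral.integral_congr (fun φ _ => by rw [hrot φ])]
    have hcomp := intervalIntegral.integral_comp_sub_right (a := (0:ℝ)) (b := 2*π)
      (fun φ => Real.log (1 + ‖((‖s‖ : ℝ):ℂ)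
        + Complex.exp (φ * Complex.I)‖^2 * P)) (Complex.arg s)
    rw [hcomp]
    have hper : Function.Periodic
        (fun φ : ℝ => Real.log (1 + ‖((‖s‖ : ℝ):ℂ)
          + Complex.exp (φ * Complex.I)‖^2 * P)) (2*π) := by
      intro x
      simp only
      congr 3
      push_cast
      rw [add_mul, Complex.exp_add]
      simp [Complex.exp_two_pi_mul_I]
    have hshift := hper.intervalIntegral_add_eq (0 - Complex.arg s) 0
    rw [show (0:ℝ) - Complex.arg s + 2*π = 2*π - Complex.arg s by ring] at hshift
    rw [hshift, zero_add]
    exact key_real P hP (‖s‖) ha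



lemma Mv_continuous (P : ℝ) : Continuous (fun a : ℝ => Mv P a) := by
  unfold Mv; fun_prop

lemma Mv_one_le (P : ℝ) (hP : 0 < P) (a : ℝ) : 1 ≤ Mv P a := by
  have h := Mv_ge P hP a
  have h1 : (0:ℝ) < 1 + a^2*P := by positivity
  have h2 : (0:ℝ) < P/(1+a^2*P)^2 := by positivity
  nlinarith [sq_nonneg a]

lemma Mv_le (P : ℝ) (hP : 0 < P) (a : ℝ) : Mv P a ≤ 1 + P*(a^2+1) := by
  rw [Mv]
  have h1 : Real.sqrt ((1 + P*(a^2+1))^2 - (2*P*a)^2) ≤ 1 + P*(a^2+1) := by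
    have h2 : (1 + P*(a^2+1))^2 - (2*P*a)^2 ≤ (1 + P*(a^2+1))^2 := by
      nlinarith [sq_nonneg (2*P*a)]
    calc Real.sqrt ((1 + P*(a^2+1))^2 - (2*P*a)^2) ≤ Real.sqrt ((1 + P*(a^2+1))^2) :=
          Real.sqrt_le_sqrt h2
      _ = 1 + P*(a^2+1) := Real.sqrt_sq (by positivity)
  linarith

/-- With i.i.d. phases `θ_l ~ Uniform(0, 2π)`, the sequence
`R̄(i) = E[log(1 + |∑_{l<i} e^{iθ_l}|² P)]` is strictly increasing. -/
theorem rate_strictMono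
    {Ω : Type*} [MeasurableSpace Ω] (μ : Measure Ω) [IsProbabilityMeasure μ]
    (θ : ℕ → Ω → ℝ) (hmeas : ∀ l, Measurable (θ l))
    (hindep : iIndepFun θ μ)
    (hunif : ∀ l, μ.map (θ l)
      = (ENNReal.ofReal (2 * π))⁻¹ • volume.restrict (Set.Icc 0 (2 * π)))
    (P : ℝ) (hP : 0 < P) :
    StrictMono (fun i : ℕ =>
      ∫ ω, Real.log (1 + ‖
        (∑ l ∈ Finset.range i, Complex.exp (θ l ω * Complex.I))‖ ^ 2 * P) ∂μ) := by
  apply strictMono_nat_of_lt_succ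
  intro i
  show _ < _
  haveI hνprob : IsProbabilityMeasure (μ.map (θ i)) :=
    Measure.isProbabilityMeasure_map (hmeas i).aemeasurable
  set S : Ω → ℂ := fun ω => ∑ l ∈ Finset.range i, Complex.exp (θ l ω * Complex.I) with hS
  have hSmeas : Measurable S := by
    apply Finset.measurable_sum
    intro l _
    exact Complex.measurable_exp.comp
      ((Complex.measurable_ofReal.comp (hmeas l)).mul_const Complex.I)
  have hSbd : ∀ ω, ‖S ω‖ ≤ (i:ℝ) := by
    intro ω
    calc ‖S ω‖ ≤ ∑ l ∈ Finset.range i,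
          ‖Complex.exp (θ l ω * Complex.I)‖ := norm_sum_le _ _
      _ = (i:ℝ) := by simp [Complex.norm_exp_ofReal_mul_I]
  -- independence of S and θ i
  have hind : IndepFun S (θ i) μ := by
    have h0 := hindep.indepFun_finset (Finset.range i) {i}
      (by simp [Finset.disjoint_singleton_right]) hmeas
    have hg1 : Measurable (fun v : ((l : (Finset.range i : Finset ℕ)) → ℝ) =>
        ∑ l : (Finset.range i : Finset ℕ), Complex.exp (v l * Complex.I)) := by
      apply Finset.measurable_sum
      intro l _
      exact Complex.measurable_exp.comp
        ((Complex.measurable_ofReal.comp (measurable_pi_apply l)).mul_const Complex.I)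
    have hg2 : Measurable (fun v : ((l : ({i} : Finset ℕ)) → ℝ) =>
        v ⟨i, Finset.mem_singleton_self i⟩) := measurable_pi_apply _
    have h1 := h0.comp hg1 hg2
    have e1 : (fun v : ((l : (Finset.range i : Finset ℕ)) → ℝ) =>
          ∑ l : (Finset.range i : Finset ℕ), Complex.exp (v l * Complex.I))
          ∘ (fun a (l : (Finset.range i : Finset ℕ)) => θ l a) = S := by
      funext a
      simp only [Function.comp_apply, hS]
      rw [← Finset.sum_coe_sort (Finset.range i) (fun l => Complex.exp (θ l a * Complex.I))]
    have e2 : (fun v : ((l : ({i} : Finset ℕ)) → ℝ) => v ⟨i, Finset.mem_singleton_self i⟩)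
          ∘ (fun a (l : ({i} : Finset ℕ)) => θ l a) = θ i := rfl
    rw [e1, e2] at h1
    exact h1
  have hpair : μ.map (fun ω => (S ω, θ i ω)) = (μ.map S).prod (μ.map (θ i)) :=
    (ProbabilityTheory.indepFun_iff_map_prod_eq_prod_map_map
      hSmeas.aemeasurable (hmeas i).aemeasurable).1 hind
  haveI : IsProbabilityMeasure (μ.map S) := Measure.isProbabilityMeasure_map hSmeas.aemeasurable
  set F : ℂ × ℝ → ℝ :=
    fun p => Real.log (1 + ‖p.1 + Complex.exp (p.2 * Complex.I)‖^2 * P) with hF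
  have hFcont : Continuous F := by
    apply Continuous.log
    · exact continuous_const.add (((continuous_norm.comp
        (continuous_fst.add (Complex.continuous_exp.comp
          ((Complex.continuous_ofReal.comp continuous_snd).mul continuous_const)))).pow 2).mul
        continuous_const)
    · intro p
      have : (0:ℝ) < 1 + ‖p.1 + Complex.exp (p.2 * Complex.I)‖^2 * P := by
        positivity
      exact this.ne'
  -- integrability of F on the product
  have hFbd : ∀ p : ℂ × ℝ, ‖p.1‖ ≤ (i:ℝ) →
      ‖F p‖ ≤ Real.log (1 + ((i:ℝ)+1)^2*P) := by
    intro p hp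
    have habs : ‖p.1 + Complex.exp (p.2 * Complex.I)‖ ≤ (i:ℝ)+1 := by
      calc ‖p.1 + Complex.exp (p.2 * Complex.I)‖
          ≤ ‖p.1‖ + ‖Complex.exp (p.2 * Complex.I)‖ :=
            norm_add_le _ _
        _ ≤ (i:ℝ) + 1 := by rw [Complex.norm_exp_ofReal_mul_I]; linarith
    have h1 : (1:ℝ) ≤ 1 + ‖p.1 + Complex.exp (p.2 * Complex.I)‖^2 * P := by
      have := mul_nonneg (sq_nonneg (‖p.1 + Complex.exp (p.2 * Complex.I)‖)) hP.le
      linarith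
    have h2 : F p ≤ Real.log (1 + ((i:ℝ)+1)^2*P) := by
      apply Real.log_le_log (by positivity)
      have h3 : ‖p.1 + Complex.exp (p.2 * Complex.I)‖^2 ≤ ((i:ℝ)+1)^2 := by
        apply sq_le_sq'
          (by linarith [norm_nonneg (p.1 + Complex.exp (p.2 * Complex.I))]) habs
      nlinarith
    have h3 : 0 ≤ F p := Real.log_nonneg h1
    rw [Real.norm_eq_abs, abs_of_nonneg h3]
    exact h2
  have haefst : ∀ᵐ p ∂((μ.map S).prod (μ.map (θ i))), ‖p.1‖ ≤ (i:ℝ) := by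
    have hA : MeasurableSet {s : ℂ | ‖s‖ ≤ (i:ℝ)} :=
      measurableSet_le continuous_norm.measurable measurable_const
    have hpre : S ⁻¹' ({s : ℂ | ‖s‖ ≤ (i:ℝ)}ᶜ) = ∅ := by
      ext ω; simp [hSbd ω]
    have h1 : (μ.map S) {s : ℂ | ‖s‖ ≤ (i:ℝ)}ᶜ = 0 := by
      rw [Measure.map_apply hSmeas hA.compl, hpre, measure_empty]
    rw [ae_iff]
    have heq : {p : ℂ × ℝ | ¬ ‖p.1‖ ≤ (i:ℝ)}
        = {s : ℂ | ‖s‖ ≤ (i:ℝ)}ᶜ ×ˢ (Set.univ : Set ℝ) := by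
      ext p; simp
    rw [heq, Measure.prod_prod, h1, zero_mul]
  have hFint : Integrable F ((μ.map S).prod (μ.map (θ i))) := by
    apply Integrable.mono' (integrable_const (Real.log (1 + ((i:ℝ)+1)^2*P)))
      hFcont.aestronglyMeasurable
    filter_upwards [haefst] with p hp
    exact hFbd p hp
  -- inner integral
  have hinner : ∀ s : ℂ, ∫ x, F (s, x) ∂(μ.map (θ i)) = Real.log (Mv P (‖s‖)) := by
    intro s
    rw [hunif i, integral_smul_measure]
    have h1 : ∫ x in Set.Icc 0 (2*π), F (s, x) = ∫ x in (0:ℝ)..(2*π), F (s, x) := by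
      rw [intervalIntegral.integral_of_le (by positivity), integral_Icc_eq_integral_Ioc]
    rw [h1, hF]
    simp only
    rw [key_complex P hP s]
    have h2 : ((ENNReal.ofReal (2 * π))⁻¹).toReal = (2*π)⁻¹ := by
      rw [ENNReal.toReal_inv, ENNReal.toReal_ofReal (by positivity)]
    rw [h2, smul_eq_mul]
    have hπ : (2*π) ≠ 0 := by positivity
    field_simp
  have hsucc : ∀ ω, (∑ l ∈ Finset.range (i+1), Complex.exp (θ l ω * Complex.I))
      = S ω + Complex.exp (θ i ω * Complex.I) := by
    intro ω; rw [Finset.sum_range_succ]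
  have hMvlogcont : Continuous (fun s : ℂ => Real.log (Mv P (‖s‖))) := by
    apply Continuous.log ((Mv_continuous P).comp continuous_norm)
    intro s
    have h := Mv_one_le P hP (‖s‖)
    exact (by linarith : (0:ℝ) < Mv P (‖s‖)).ne'
  have hlogcont : Continuous (fun s : ℂ => Real.log (1 + ‖s‖^2 * P)) := by
    apply Continuous.log
      (continuous_const.add ((continuous_norm.pow 2).mul continuous_const))
    intro s
    have : (0:ℝ) < 1 + ‖s‖^2 * P := by positivity
    exact this.ne'
  have hRint : Integrable (fun ω => Real.log (1 + ‖S ω‖^2 * P)) μ := by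
    apply Integrable.mono' (integrable_const (Real.log (1 + (i:ℝ)^2*P)))
      (hlogcont.measurable.comp hSmeas).aestronglyMeasurable
    apply ae_of_all
    intro ω
    simp only [Function.comp_apply]
    rw [Real.norm_eq_abs, abs_of_nonneg (Real.log_nonneg (by
      have := mul_nonneg (sq_nonneg (‖S ω‖)) hP.le; linarith))]
    apply Real.log_le_log (by positivity)
    have h7 := hSbd ω
    have hsq := mul_le_mul h7 h7 (norm_nonneg (S ω)) (Nat.cast_nonneg i)
    nlinarith [hsq, hP.le]
  have hMint : Integrable (fun ω => Real.log (Mv P (‖S ω‖))) μ := by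
    apply Integrable.mono' (integrable_const (Real.log (1 + P*((i:ℝ)^2+1))))
      (hMvlogcont.measurable.comp hSmeas).aestronglyMeasurable
    apply ae_of_all
    intro ω
    simp only [Function.comp_apply]
    rw [Real.norm_eq_abs, abs_of_nonneg (Real.log_nonneg (Mv_one_le P hP _))]
    apply Real.log_le_log (by linarith [Mv_one_le P hP (‖S ω‖)])
    calc Mv P (‖S ω‖) ≤ 1 + P*((‖S ω‖)^2+1) := Mv_le P hP _
      _ ≤ 1 + P*((i:ℝ)^2+1) := by
          have h7 := hSbd ω
          have hsq := mul_le_mul h7 h7 (norm_nonneg (S ω)) (Nat.cast_nonneg i)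
          nlinarith [hsq, hP.le]
  have hRHS : ∫ ω, Real.log (1 + ‖∑ l ∈ Finset.range (i+1), Complex.exp (θ l ω * Complex.I)‖^2 * P) ∂μ
      = ∫ ω, Real.log (Mv P (‖S ω‖)) ∂μ := by
    calc ∫ ω, Real.log (1 + ‖∑ l ∈ Finset.range (i+1), Complex.exp (θ l ω * Complex.I)‖^2 * P) ∂μ
        = ∫ ω, F (S ω, θ i ω) ∂μ := by
          apply integral_congr_ae
          apply ae_of_all
          intro ω
          rw [hF]
          simp only
          rw [hsucc ω]
      _ = ∫ p, F p ∂(μ.map (fun ω => (S ω, θ i ω))) :=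
          (integral_map (hSmeas.prodMk (hmeas i)).aemeasurable
            hFcont.aestronglyMeasurable).symm
      _ = ∫ p, F p ∂((μ.map S).prod (μ.map (θ i))) := by rw [hpair]
      _ = ∫ s, ∫ x, F (s, x) ∂(μ.map (θ i)) ∂(μ.map S) := integral_prod F hFint
      _ = ∫ s, Real.log (Mv P (‖s‖)) ∂(μ.map S) :=
          integral_congr_ae (ae_of_all _ fun s => hinner s)
      _ = ∫ ω, Real.log (Mv P (‖S ω‖)) ∂μ :=
          integral_map hSmeas.aemeasurable hMvlogcont.aestronglyMeasurable
  rw [hRHS]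
  set δ := Real.log (1 + P/(1+(i:ℝ)^2*P)^2) with hδdef
  have hδpos : 0 < δ := by
    apply Real.log_pos
    have : (0:ℝ) < P/(1+(i:ℝ)^2*P)^2 := by positivity
    linarith
  have hlow : ∀ ω, Real.log (1 + ‖S ω‖^2 * P) + δ
      ≤ Real.log (Mv P (‖S ω‖)) := by
    intro ω
    have ha0 : 0 ≤ ‖S ω‖ := norm_nonneg _
    have hai : ‖S ω‖ ≤ (i:ℝ) := hSbd ω
    set a := ‖S ω‖ with ha
    have hu : (0:ℝ) < 1 + a^2*P := by positivity
    have h1 := Mv_ge P hP a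
    have h2 : Real.log ((1 + a^2*P) * (1 + P/(1+a^2*P)^2))
        = Real.log (1 + a^2*P) + Real.log (1 + P/(1+a^2*P)^2) :=
      Real.log_mul (by positivity) (by positivity)
    have h3 : δ ≤ Real.log (1 + P/(1+a^2*P)^2) := by
      apply Real.log_le_log (by positivity)
      have haa : a^2 ≤ (i:ℝ)^2 := by nlinarith
      have h6 : 1 + a^2*P ≤ 1 + (i:ℝ)^2*P := by nlinarith
      have hle : (1+a^2*P)^2 ≤ (1+(i:ℝ)^2*P)^2 := by
        apply pow_le_pow_left₀ (by positivity) h6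
      have h5 := div_le_div_of_nonneg_left hP.le (by positivity : (0:ℝ) < (1+a^2*P)^2) hle
      linarith
    have h4 : Real.log ((1 + a^2*P) * (1 + P/(1+a^2*P)^2)) ≤ Real.log (Mv P a) :=
      Real.log_le_log (by positivity) h1
    linarith
  calc ∫ ω, Real.log (1 + ‖S ω‖^2*P) ∂μ
      < ∫ ω, Real.log (1 + ‖S ω‖^2*P) ∂μ + δ := by linarith
    _ = ∫ ω, (Real.log (1 + ‖S ω‖^2*P) + δ) ∂μ := by
        rw [integral_add hRint (integrable_const δ), integral_const]
        simp [measure_univ]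
    _ ≤ ∫ ω, Real.log (Mv P (‖S ω‖)) ∂μ :=
        integral_mono (hRint.add (integrable_const δ)) hMint hlow
end

section
/- Let P > 0 and {θ_l} be i.i.d. Uniform(0, 2π). With R̄(i) = E[log(1 + |∑_{l=1}^{i} e^{iθ_l}|² P)], the sequence R̄(i) tends to infinity as i → ∞. -/
open Real MeasureTheory ProbabilityTheory Filter

lemma aux_integrable_comp {Ω E : Type*} [MeasurableSpace Ω] {μ : Measure Ω}
    [IsFiniteMeasure μ] [NormedAddCommGroup E] [MeasurableSpace E] [OpensMeasurableSpace E]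
    [ProperSpace E] {f : Ω → E} (hf : Measurable f) {C : ℝ} (hC : ∀ ω, ‖f ω‖ ≤ C)
    {φ : E → ℝ} (hφ : Continuous φ) : Integrable (fun ω => φ (f ω)) μ := by
  obtain ⟨M, hM⟩ := (isCompact_closedBall (0 : E) C).exists_bound_of_continuousOn hφ.continuousOn
  exact (integrable_const M).mono' (hφ.measurable.comp hf).aestronglyMeasurable
    (ae_of_all _ fun ω => hM _ (by simpa [Metric.mem_closedBall, dist_zero_right] using hC ω))

lemma aux_chord {B y c : ℝ} (hB : 0 < B) (hy0 : 0 ≤ y) (hyB : y ≤ B) (hc : 0 < c) :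
    y / B * Real.log (1 + B * c) ≤ Real.log (1 + y * c) := by
  have ht0 : 0 ≤ y / B := by positivity
  have ht1 : y / B ≤ 1 := by rw [div_le_one hB]; exact hyB
  have h := strictConcaveOn_log_Ioi.concaveOn.2 (Set.mem_Ioi.2 one_pos)
    (Set.mem_Ioi.2 (by nlinarith : (0:ℝ) < 1 + B * c)) (by linarith : (0:ℝ) ≤ 1 - y / B)
    ht0 (by ring)
  have key : (1 - y / B) • (1:ℝ) + (y / B) • (1 + B * c) = 1 + y * c := by
    have hB' : B ≠ 0 := ne_of_gt hB
    field_simp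
    linear_combination (y * c + 1) * mul_inv_cancel₀ hB'
  rw [key] at h
  simpa [Real.log_one] using h

/-- With i.i.d. phases `θ_l ~ Uniform(0, 2π)`, the sequence
`R̄(i) = E[log(1 + |∑_{l<i} e^{iθ_l}|² P)]` tends to infinity as `i → ∞`. -/
theorem rate_tendsto_atTop
    {Ω : Type*} [MeasurableSpace Ω] (μ : Measure Ω) [IsProbabilityMeasure μ]
    (θ : ℕ → Ω → ℝ) (hmeas : ∀ l, Measurable (θ l))
    (hindep : iIndepFun θ μ)
    (hunif : ∀ l, μ.map (θ l)
      = (ENNReal.ofReal (2 * π))⁻¹ • volume.restrict (Set.Icc 0 (2 * π)))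
    (P : ℝ) (hP : 0 < P) :
    Tendsto (fun i : ℕ =>
      ∫ ω, Real.log (1 + ‖
        (∑ l ∈ Finset.range i, Complex.exp (θ l ω * Complex.I))‖ ^ 2 * P) ∂μ)
      atTop atTop := by
  classical
  set Z : ℕ → Ω → ℂ := fun l ω => Complex.exp (θ l ω * Complex.I) with hZdef
  have hZmeas : ∀ l, Measurable (Z l) := fun l =>
    Complex.measurable_exp.comp ((Complex.measurable_ofReal.comp (hmeas l)).mul_const _)
  have hZre : ∀ l ω, (Z l ω).re = Real.cos (θ l ω) := fun l ω =>
    Complex.exp_ofReal_mul_I_re _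
  have hZim : ∀ l ω, (Z l ω).im = Real.sin (θ l ω) := fun l ω =>
    Complex.exp_ofReal_mul_I_im _
  have hZnorm : ∀ l ω, ‖Z l ω‖ = 1 := by
    intro l ω
    rw [hZdef]
    simp [Complex.norm_exp]
  set S : ℕ → Ω → ℂ := fun i ω => ∑ l ∈ Finset.range i, Z l ω with hSdef
  have hSmeas : ∀ i, Measurable (S i) := fun i => Finset.measurable_sum _ fun l _ => hZmeas l
  have hSnorm : ∀ i ω, ‖S i ω‖ ≤ i := by
    intro i ω
    calc ‖S i ω‖ ≤ ∑ l ∈ Finset.range i, ‖Z l ω‖ :=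
          norm_sum_le _ _
      _ = i := by simp [hZnorm]
  -- Independence
  have hZindep : iIndepFun Z μ :=
    hindep.comp (fun _ (x : ℝ) => Complex.exp (x * Complex.I))
      (fun _ => Complex.measurable_exp.comp (Complex.measurable_ofReal.mul_const _))
  have hSZ : ∀ i, IndepFun (S i) (Z i) μ := by
    intro i
    have h := hZindep.indepFun_sum_range_succ hZmeas i
    have hs : S i = (∑ j ∈ Finset.range i, Z j) := by
      funext ω; simp [hSdef, Finset.sum_apply]
    rwa [hs]
  have fact : ∀ (i : ℕ) (φ ψ : ℂ → ℝ), Continuous φ → Continuous ψ →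
      ∫ ω, φ (S i ω) * ψ (Z i ω) ∂μ
        = (∫ ω, φ (S i ω) ∂μ) * ∫ ω, ψ (Z i ω) ∂μ := by
    intro i φ ψ hφ hψ
    exact ((hSZ i).comp hφ.measurable hψ.measurable).integral_fun_mul_eq_mul_integral
      ((hφ.measurable.comp (hSmeas i)).aestronglyMeasurable)
      ((hψ.measurable.comp (hZmeas i)).aestronglyMeasurable)
  -- Integrability helpers
  have intS : ∀ (i : ℕ) (φ : ℂ → ℝ), Continuous φ → Integrable (fun ω => φ (S i ω)) μ :=
    fun i φ hφ => aux_integrable_comp (hSmeas i) (C := i)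
      (fun ω => by simpa using hSnorm i ω) hφ
  have intSZmul : ∀ (i : ℕ) (φ ψ : ℂ → ℝ), Continuous φ → Continuous ψ →
      Integrable (fun ω => φ (S i ω) * ψ (Z i ω)) μ := by
    intro i φ ψ hφ hψ
    have hpair : Measurable (fun ω => (S i ω, Z i ω)) := (hSmeas i).prodMk (hZmeas i)
    refine aux_integrable_comp (φ := fun p : ℂ × ℂ => φ p.1 * ψ p.2) hpair
      (C := max i 1) (fun ω => ?_) ((hφ.comp continuous_fst).mul (hψ.comp continuous_snd))
    rw [Prod.norm_def]
    exact max_le_max (by simpa using hSnorm i ω)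
      (by simp [hZnorm])
  -- Uniform distribution integrals
  have htp : (0:ℝ) < 2 * π := by positivity
  have hU : ∀ (l : ℕ) (g : ℝ → ℝ), Continuous g →
      ∫ ω, g (θ l ω) ∂μ = (2 * π)⁻¹ * ∫ x in (0:ℝ)..(2 * π), g x := by
    intro l g hg
    rw [← integral_map (hmeas l).aemeasurable hg.measurable.aestronglyMeasurable, hunif l,
      integral_smul_measure, ENNReal.toReal_inv, ENNReal.toReal_ofReal htp.le,
      MeasureTheory.integral_Icc_eq_integral_Ioc,
      ← intervalIntegral.integral_of_le htp.le, smul_eq_mul]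
  have Ec : ∀ l, ∫ ω, (Z l ω).re ∂μ = 0 := by
    intro l
    simp only [hZre]
    rw [hU l _ Real.continuous_cos]
    simp [integral_cos, Real.sin_two_pi]
  have Es : ∀ l, ∫ ω, (Z l ω).im ∂μ = 0 := by
    intro l
    simp only [hZim]
    rw [hU l _ Real.continuous_sin]
    simp [integral_sin, Real.cos_two_pi]
  have Ec2 : ∀ l, ∫ ω, (Z l ω).re ^ 2 ∂μ = 1 / 2 := by
    intro l
    simp only [hZre]
    rw [hU l (fun x => Real.cos x ^ 2) (Real.continuous_cos.pow 2), integral_cos_sq]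
    rw [Real.sin_two_pi, Real.cos_two_pi, Real.sin_zero, Real.cos_zero]
    field_simp
    ring
  have Es2 : ∀ l, ∫ ω, (Z l ω).im ^ 2 ∂μ = 1 / 2 := by
    intro l
    simp only [hZim]
    rw [hU l (fun x => Real.sin x ^ 2) (Real.continuous_sin.pow 2), integral_sin_sq]
    rw [Real.sin_two_pi, Real.cos_two_pi, Real.sin_zero, Real.cos_zero]
    field_simp
    ring
  have Ecs : ∀ l, ∫ ω, (Z l ω).re * (Z l ω).im ∂μ = 0 := by
    intro l
    simp only [hZre, hZim]
    rw [hU l (fun x => Real.cos x * Real.sin x) (Real.continuous_cos.mul Real.continuous_sin)]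
    have hcs : (fun x => Real.cos x * Real.sin x) = fun x => Real.sin x * Real.cos x :=
      funext fun x => mul_comm _ _
    have : ∫ x in (0:ℝ)..(2 * π), Real.cos x * Real.sin x = 0 := by
      rw [intervalIntegral.integral_congr (g := fun x => Real.sin x * Real.cos x)
        (fun x _ => mul_comm _ _), integral_sin_mul_cos₁]
      simp [Real.sin_two_pi]
    rw [this, mul_zero]
  -- the squared modulus
  set X : ℕ → Ω → ℝ := fun i ω => ‖S i ω‖ ^ 2 with hXdef
  have hX0 : ∀ i ω, 0 ≤ X i ω := fun i ω => sq_nonneg _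
  have hXb : ∀ i ω, X i ω ≤ (i:ℝ) ^ 2 := fun i ω => by
    have := hSnorm i ω
    have h0 : (0:ℝ) ≤ ‖S i ω‖ := norm_nonneg _
    simp only [hXdef]
    nlinarith
  have intX : ∀ i, Integrable (X i) μ :=
    fun i => intS i (fun z => ‖z‖ ^ 2) (continuous_norm.pow 2)
  have intX2 : ∀ i, Integrable (fun ω => X i ω ^ 2) μ :=
    fun i => intS i (fun z => (‖z‖ ^ 2) ^ 2) ((continuous_norm.pow 2).pow 2)
  -- pointwise recursion
  have hXrec : ∀ i ω, X (i + 1) ω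
      = X i ω + (2 * ((S i ω).re * (Z i ω).re) + 2 * ((S i ω).im * (Z i ω).im) + 1) := by
    intro i ω
    have hz : (Z i ω).re ^ 2 + (Z i ω).im ^ 2 = 1 := by
      rw [hZre, hZim]
      exact Real.cos_sq_add_sin_sq _
    have hs : S (i + 1) ω = S i ω + Z i ω := by
      simp [hSdef, Finset.sum_range_succ]
    simp only [hXdef, hs, Complex.sq_norm, Complex.normSq_apply, Complex.add_re, Complex.add_im]
    nlinarith [hz]
  -- first moment
  have m1 : ∀ i, ∫ ω, X i ω ∂μ = i := by
    intro i
    induction i with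
    | zero => simp [hXdef, hSdef]
    | succ i ih =>
      have iAc : Integrable (fun ω => (S i ω).re * (Z i ω).re) μ :=
        intSZmul i _ _ Complex.continuous_re Complex.continuous_re
      have iBs : Integrable (fun ω => (S i ω).im * (Z i ω).im) μ :=
        intSZmul i _ _ Complex.continuous_im Complex.continuous_im
      have hAc : ∫ ω, (S i ω).re * (Z i ω).re ∂μ = 0 := by
        rw [fact i _ _ Complex.continuous_re Complex.continuous_re, Ec i, mul_zero]
      have hBs : ∫ ω, (S i ω).im * (Z i ω).im ∂μ = 0 := by
        rw [fact i _ _ Complex.continuous_im Complex.continuous_im, Es i, mul_zero]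
      have e1 : ∫ ω, X (i + 1) ω ∂μ
          = ∫ ω, (X i ω + (2 * ((S i ω).re * (Z i ω).re)
            + 2 * ((S i ω).im * (Z i ω).im) + 1)) ∂μ :=
        integral_congr_ae (ae_of_all _ fun ω => hXrec i ω)
      have iR2 : Integrable (fun ω => 2 * ((S i ω).re * (Z i ω).re)
          + 2 * ((S i ω).im * (Z i ω).im)) μ := (iAc.const_mul 2).add (iBs.const_mul 2)
      have iR : Integrable (fun ω => 2 * ((S i ω).re * (Z i ω).re)
          + 2 * ((S i ω).im * (Z i ω).im) + 1) μ := iR2.add (integrable_const 1)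
      rw [e1, integral_add (intX i) iR,
        integral_add iR2 (integrable_const 1),
        integral_add (iAc.const_mul 2) (iBs.const_mul 2),
        integral_const_mul, integral_const_mul, hAc, hBs, ih]
      simp
  -- second moment
  have m2 : ∀ i, ∫ ω, X i ω ^ 2 ∂μ = 2 * (i:ℝ) ^ 2 - i := by
    intro i
    induction i with
    | zero => simp [hXdef, hSdef]
    | succ i ih =>
      -- terms
      have c_re : Continuous fun z : ℂ => z.re := Complex.continuous_re
      have c_im : Continuous fun z : ℂ => z.im := Complex.continuous_im
      have c_re2 : Continuous fun z : ℂ => z.re ^ 2 := c_re.pow 2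
      have c_im2 : Continuous fun z : ℂ => z.im ^ 2 := c_im.pow 2
      have c_ab : Continuous fun z : ℂ => ‖z‖ ^ 2 := continuous_norm.pow 2
      have c_reim : Continuous fun z : ℂ => z.re * z.im := c_re.mul c_im
      have c_Xre : Continuous fun z : ℂ => ‖z‖ ^ 2 * z.re := c_ab.mul c_re
      have c_Xim : Continuous fun z : ℂ => ‖z‖ ^ 2 * z.im := c_ab.mul c_im
      have I1 : Integrable (fun ω => X i ω ^ 2) μ := intX2 i
      have I2 : Integrable (fun ω => 2 * X i ω) μ := (intX i).const_mul 2
      have I3 : Integrable (fun ω => 4 * ((S i ω).re ^ 2 * (Z i ω).re ^ 2)) μ :=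
        (intSZmul i _ _ c_re2 c_re2).const_mul 4
      have I4 : Integrable (fun ω => 4 * ((S i ω).im ^ 2 * (Z i ω).im ^ 2)) μ :=
        (intSZmul i _ _ c_im2 c_im2).const_mul 4
      have I5 : Integrable
          (fun ω => 8 * (((S i ω).re * (S i ω).im) * ((Z i ω).re * (Z i ω).im))) μ :=
        (intSZmul i _ _ c_reim c_reim).const_mul 8
      have I6 : Integrable (fun ω => 4 * ((X i ω * (S i ω).re) * (Z i ω).re)) μ :=
        (intSZmul i _ _ c_Xre c_re).const_mul 4
      have I7 : Integrable (fun ω => 4 * ((X i ω * (S i ω).im) * (Z i ω).im)) μ :=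
        (intSZmul i _ _ c_Xim c_im).const_mul 4
      have I8 : Integrable (fun ω => 4 * ((S i ω).re * (Z i ω).re)) μ :=
        (intSZmul i _ _ c_re c_re).const_mul 4
      have I9 : Integrable (fun ω => 4 * ((S i ω).im * (Z i ω).im)) μ :=
        (intSZmul i _ _ c_im c_im).const_mul 4
      have hA2 : ∫ ω, (S i ω).re ^ 2 * (Z i ω).re ^ 2 ∂μ
          = (∫ ω, (S i ω).re ^ 2 ∂μ) * (1 / 2) := by
        rw [fact i _ _ c_re2 c_re2, Ec2 i]
      have hB2 : ∫ ω, (S i ω).im ^ 2 * (Z i ω).im ^ 2 ∂μ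
          = (∫ ω, (S i ω).im ^ 2 ∂μ) * (1 / 2) := by
        rw [fact i _ _ c_im2 c_im2, Es2 i]
      have hABcs : ∫ ω, ((S i ω).re * (S i ω).im) * ((Z i ω).re * (Z i ω).im) ∂μ = 0 := by
        rw [fact i _ _ c_reim c_reim, Ecs i, mul_zero]
      have hXAc : ∫ ω, (X i ω * (S i ω).re) * (Z i ω).re ∂μ = 0 := by
        rw [fact i _ _ c_Xre c_re, Ec i, mul_zero]
      have hXBs : ∫ ω, (X i ω * (S i ω).im) * (Z i ω).im ∂μ = 0 := by
        rw [fact i _ _ c_Xim c_im, Es i, mul_zero]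
      have hAc : ∫ ω, (S i ω).re * (Z i ω).re ∂μ = 0 := by
        rw [fact i _ _ c_re c_re, Ec i, mul_zero]
      have hBs : ∫ ω, (S i ω).im * (Z i ω).im ∂μ = 0 := by
        rw [fact i _ _ c_im c_im, Es i, mul_zero]
      have hAB : (∫ ω, (S i ω).re ^ 2 ∂μ) + (∫ ω, (S i ω).im ^ 2 ∂μ) = (i:ℝ) := by
        rw [← integral_add (intS i _ c_re2) (intS i _ c_im2)]
        rw [show (∫ ω, ((S i ω).re ^ 2 + (S i ω).im ^ 2) ∂μ) = ∫ ω, X i ω ∂μ from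
          integral_congr_ae (ae_of_all _ fun ω => by
            simp [hXdef, Complex.sq_norm, Complex.normSq_apply]; ring), m1 i]
      have hexp : ∀ ω, X (i + 1) ω ^ 2
          = X i ω ^ 2 + 2 * X i ω
            + 4 * ((S i ω).re ^ 2 * (Z i ω).re ^ 2)
            + 4 * ((S i ω).im ^ 2 * (Z i ω).im ^ 2)
            + 8 * (((S i ω).re * (S i ω).im) * ((Z i ω).re * (Z i ω).im))
            + 4 * ((X i ω * (S i ω).re) * (Z i ω).re)
            + 4 * ((X i ω * (S i ω).im) * (Z i ω).im)
            + 4 * ((S i ω).re * (Z i ω).re)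
            + 4 * ((S i ω).im * (Z i ω).im) + 1 := by
        intro ω
        rw [hXrec i ω]
        ring
      have J2 : Integrable (fun ω => X i ω ^ 2 + 2 * X i ω) μ := I1.add I2
      have J3 : Integrable (fun ω => X i ω ^ 2 + 2 * X i ω + 4 * ((S i ω).re ^ 2 * (Z i ω).re ^ 2)) μ := J2.add I3
      have J4 : Integrable (fun ω => X i ω ^ 2 + 2 * X i ω + 4 * ((S i ω).re ^ 2 * (Z i ω).re ^ 2) + 4 * ((S i ω).im ^ 2 * (Z i ω).im ^ 2)) μ := J3.add I4
      have J5 : Integrable (fun ω => X i ω ^ 2 + 2 * X i ω + 4 * ((S i ω).re ^ 2 * (Z i ω).re ^ 2) + 4 * ((S i ω).im ^ 2 * (Z i ω).im ^ 2) + 8 * (((S i ω).re * (S i ω).im) * ((Z i ω).re * (Z i ω).im))) μ := J4.add I5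
      have J6 : Integrable (fun ω => X i ω ^ 2 + 2 * X i ω + 4 * ((S i ω).re ^ 2 * (Z i ω).re ^ 2) + 4 * ((S i ω).im ^ 2 * (Z i ω).im ^ 2) + 8 * (((S i ω).re * (S i ω).im) * ((Z i ω).re * (Z i ω).im)) + 4 * ((X i ω * (S i ω).re) * (Z i ω).re)) μ := J5.add I6
      have J7 : Integrable (fun ω => X i ω ^ 2 + 2 * X i ω + 4 * ((S i ω).re ^ 2 * (Z i ω).re ^ 2) + 4 * ((S i ω).im ^ 2 * (Z i ω).im ^ 2) + 8 * (((S i ω).re * (S i ω).im) * ((Z i ω).re * (Z i ω).im)) + 4 * ((X i ω * (S i ω).re) * (Z i ω).re) + 4 * ((X i ω * (S i ω).im) * (Z i ω).im)) μ := J6.add I7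
      have J8 : Integrable (fun ω => X i ω ^ 2 + 2 * X i ω + 4 * ((S i ω).re ^ 2 * (Z i ω).re ^ 2) + 4 * ((S i ω).im ^ 2 * (Z i ω).im ^ 2) + 8 * (((S i ω).re * (S i ω).im) * ((Z i ω).re * (Z i ω).im)) + 4 * ((X i ω * (S i ω).re) * (Z i ω).re) + 4 * ((X i ω * (S i ω).im) * (Z i ω).im) + 4 * ((S i ω).re * (Z i ω).re)) μ := J7.add I8
      have J9 : Integrable (fun ω => X i ω ^ 2 + 2 * X i ω + 4 * ((S i ω).re ^ 2 * (Z i ω).re ^ 2) + 4 * ((S i ω).im ^ 2 * (Z i ω).im ^ 2) + 8 * (((S i ω).re * (S i ω).im) * ((Z i ω).re * (Z i ω).im)) + 4 * ((X i ω * (S i ω).re) * (Z i ω).re) + 4 * ((X i ω * (S i ω).im) * (Z i ω).im) + 4 * ((S i ω).re * (Z i ω).re) + 4 * ((S i ω).im * (Z i ω).im)) μ := J8.add I9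
      rw [show (∫ ω, X (i + 1) ω ^ 2 ∂μ) = ∫ ω, (X i ω ^ 2 + 2 * X i ω
            + 4 * ((S i ω).re ^ 2 * (Z i ω).re ^ 2)
            + 4 * ((S i ω).im ^ 2 * (Z i ω).im ^ 2)
            + 8 * (((S i ω).re * (S i ω).im) * ((Z i ω).re * (Z i ω).im))
            + 4 * ((X i ω * (S i ω).re) * (Z i ω).re)
            + 4 * ((X i ω * (S i ω).im) * (Z i ω).im)
            + 4 * ((S i ω).re * (Z i ω).re)
            + 4 * ((S i ω).im * (Z i ω).im) + 1) ∂μ from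
          integral_congr_ae (ae_of_all _ hexp)]
      rw [integral_add J9 (integrable_const 1), integral_add J8 I9, integral_add J7 I8,
        integral_add J6 I7, integral_add J5 I6, integral_add J4 I5, integral_add J3 I4,
        integral_add J2 I3, integral_add I1 I2,
        integral_const_mul, integral_const_mul, integral_const_mul, integral_const_mul,
        integral_const_mul, integral_const_mul, integral_const_mul, integral_const_mul,
        hA2, hB2, hABcs, hXAc, hXBs, hAc, hBs, ih, m1 i]
      simp only [integral_const, measure_univ, probReal_univ, ENNReal.toReal_one, smul_eq_mul, one_mul,
        mul_zero]
      push_cast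
      nlinarith [hAB]
  -- main lower bound
  have main : ∀ i : ℕ, 1 ≤ i →
      (1 / 8 : ℝ) * Real.log (1 + 4 * i * P) ≤ ∫ ω, Real.log (1 + X i ω * P) ∂μ := by
    intro i hi
    have hipos : (0:ℝ) < i := by exact_mod_cast hi
    set B' : ℝ := 4 * i with hB'def
    have hB' : 0 < B' := by positivity
    have hg0 : ∀ ω, 0 ≤ min (X i ω) B' := fun ω => le_min (hX0 i ω) hB'.le
    have hgB : ∀ ω, min (X i ω) B' ≤ B' := fun ω => min_le_right _ _
    have Ig : Integrable (fun ω => min (X i ω) B') μ :=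
      intS i (fun z => min (‖z‖ ^ 2) B')
        ((continuous_norm.pow 2).min continuous_const)
    have clog : Continuous fun z : ℂ => Real.log (1 + ‖z‖ ^ 2 * P) := by
      refine (continuous_const.add ((continuous_norm.pow 2).mul continuous_const)).log ?_
      intro z
      show 1 + ‖z‖ ^ 2 * P ≠ 0
      have : (0:ℝ) ≤ ‖z‖ ^ 2 * P := by positivity
      linarith
    have Ilog1 : Integrable (fun ω => Real.log (1 + X i ω * P)) μ := intS i _ clog
    have cloggen : Continuous fun z : ℂ => Real.log (1 + min (‖z‖ ^ 2) B' * P) := by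
      refine (continuous_const.add
        (((continuous_norm.pow 2).min continuous_const).mul continuous_const)).log ?_
      intro z
      show 1 + min (‖z‖ ^ 2) B' * P ≠ 0
      have h1 : (0:ℝ) ≤ min (‖z‖ ^ 2) B' := le_min (by positivity) hB'.le
      nlinarith
    have Ilogg : Integrable (fun ω => Real.log (1 + min (X i ω) B' * P)) μ := intS i _ cloggen
    -- lower bound on ∫ min(X,B')
    have h1 : ∀ ω, X i ω - X i ω ^ 2 / B' ≤ min (X i ω) B' := by
      intro ω
      rcases le_total (X i ω) B' with h | h
      · rw [min_eq_left h]
        have : 0 ≤ X i ω ^ 2 / B' := by positivity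
        linarith
      · rw [min_eq_right h]
        have hx0 := hX0 i ω
        have : X i ω ≤ X i ω ^ 2 / B' := by
          rw [le_div_iff₀ hB']
          nlinarith
        linarith
    have IXX : Integrable (fun ω => X i ω - X i ω ^ 2 / B') μ :=
      (intX i).sub ((intX2 i).div_const B')
    have elow : ∫ ω, (X i ω - X i ω ^ 2 / B') ∂μ = (i:ℝ) - (2 * (i:ℝ) ^ 2 - i) / B' := by
      rw [integral_sub (intX i) ((intX2 i).div_const B'), integral_div, m1 i, m2 i]
    have intg_lb : (i:ℝ) / 2 ≤ ∫ ω, min (X i ω) B' ∂μ := by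
      have hmono := integral_mono IXX Ig h1
      rw [elow] at hmono
      have key : (2 * (i:ℝ) ^ 2 - i) / B' ≤ i / 2 := by
        rw [div_le_iff₀ hB', hB'def]
        nlinarith
      linarith
    have hlognn : 0 ≤ Real.log (1 + B' * P) := by
      apply Real.log_nonneg
      nlinarith
    have chord_int : ∀ ω,
        min (X i ω) B' * (Real.log (1 + B' * P) / B') ≤ Real.log (1 + min (X i ω) B' * P) := by
      intro ω
      have h := aux_chord hB' (hg0 ω) (hgB ω) hP
      calc min (X i ω) B' * (Real.log (1 + B' * P) / B')
          = min (X i ω) B' / B' * Real.log (1 + B' * P) := by ring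
        _ ≤ _ := h
    have mono_log : ∀ ω,
        Real.log (1 + min (X i ω) B' * P) ≤ Real.log (1 + X i ω * P) := by
      intro ω
      apply Real.log_le_log
      · have := mul_nonneg (hg0 ω) hP.le
        linarith
      · have : min (X i ω) B' ≤ X i ω := min_le_left _ _
        nlinarith
    calc (1 / 8 : ℝ) * Real.log (1 + 4 * i * P)
        = ((i:ℝ) / 2) * (Real.log (1 + B' * P) / B') := by
          rw [hB'def]
          field_simp
          ring
      _ ≤ (∫ ω, min (X i ω) B' ∂μ) * (Real.log (1 + B' * P) / B') := by
          apply mul_le_mul_of_nonneg_right intg_lb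
          positivity
      _ = ∫ ω, min (X i ω) B' * (Real.log (1 + B' * P) / B') ∂μ :=
          (integral_mul_const _ _).symm
      _ ≤ ∫ ω, Real.log (1 + min (X i ω) B' * P) ∂μ :=
          integral_mono (Ig.mul_const _) Ilogg chord_int
      _ ≤ ∫ ω, Real.log (1 + X i ω * P) ∂μ := integral_mono Ilogg Ilog1 mono_log
  -- conclude
  have hlow : Tendsto (fun i : ℕ => (1 / 8 : ℝ) * Real.log (1 + 4 * i * P)) atTop atTop := by
    apply Tendsto.const_mul_atTop (by norm_num : (0:ℝ) < 1 / 8)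
    apply Real.tendsto_log_atTop.comp
    apply tendsto_atTop_add_const_left
    exact (tendsto_natCast_atTop_atTop.const_mul_atTop (by norm_num : (0:ℝ) < 4)).atTop_mul_const hP
  refine tendsto_atTop_mono' atTop ?_ hlow
  filter_upwards [eventually_ge_atTop 1] with i hi
  exact main i hi
end

section
/- Let P > 0 and fix K, D ∈ ℕ with K ≥ 1. For each k, and i.i.d. θ₁,…,θ_L ~ Uniform(0,2π), define for b ∈ {0,1}^L and delays with fractional parts δ_l ∈ [0,1): F(b, δ, k) = E[log(1 + |∑_{l=1}^{L} b_l e^{iθ_l} G_l(k)|² P)] where G_l(k) = (1−δ_l) + δ_l e^{−2πi k/K}. Then for every b and k, F(b, δ, k) is minimized over δ ∈ [0,1)^L at δ = (1/2,…,1/2). -/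
open Real MeasureTheory ProbabilityTheory

section Aux
open intervalIntegral Metric
lemma mv_aux {f : ℂ → ℂ} (hd : DifferentiableOn ℂ f (closedBall 0 1)) :
    ∫ x in (0:ℝ)..(2*π), f (Complex.exp (x*Complex.I)) = (2*π) * f 0 := by
  have h := hd.circleIntegral_sub_inv_smul (w := 0) (by simp : (0:ℂ) ∈ ball 0 1)
  rw [circleIntegral] at h
  simp only [deriv_circleMap, circleMap_zero, sub_zero, one_mul, smul_eq_mul] at h
  have h2 : ∫ x in (0:ℝ)..(2*π), Complex.I * f (Complex.exp (x*Complex.I))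
      = (2*π*Complex.I) * f 0 := by
    rw [← h]
    congr 1
    ext θ
    have hne : Complex.exp (θ*Complex.I) ≠ 0 := Complex.exp_ne_zero _
    simp only [Complex.ofReal_one, one_mul]
    field_simp
  rw [intervalIntegral.integral_const_mul] at h2
  have h3 : Complex.I * ∫ x in (0:ℝ)..(2*π), f (Complex.exp (x*Complex.I))
      = Complex.I * ((2*π) * f 0) := by rw [h2]; ring
  exact mul_left_cancel₀ Complex.I_ne_zero h3

lemma logint {p q : ℝ} (hq : 0 ≤ q) (hpq : q < p) :
    ∫ x in (0:ℝ)..(2*π), Real.log (‖(p:ℂ) + Complex.exp (x*Complex.I) * q‖)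
      = (2*π) * Real.log p := by
  have hp : 0 < p := lt_of_le_of_lt hq hpq
  have hmem : ∀ z : ℂ, ‖z‖ ≤ 1 → ((p:ℂ) + z * q) ∈ Complex.slitPlane := by
    intro z hz
    rw [Complex.mem_slitPlane_iff]
    left
    have h1 : ((p:ℂ) + z * q).re = p + z.re * q := by simp
    rw [h1]
    have h2 : -1 ≤ z.re := by
      have := neg_abs_le z.re
      have := Complex.abs_re_le_norm z
      have h3 : |z.re| ≤ 1 := le_trans (Complex.abs_re_le_norm z) hz
      linarith [abs_le.mp h3]
    nlinarith
  have hd : DifferentiableOn ℂ (fun z => Complex.log ((p:ℂ) + z * q)) (closedBall 0 1) := by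
    intro z hz
    have hz1 : ‖z‖ ≤ 1 := by
      simpa [Complex.dist_eq] using (mem_closedBall.mp hz)
    exact ((Complex.differentiableAt_log (hmem z hz1)).comp z
      ((by fun_prop : Differentiable ℂ (fun z : ℂ => (p:ℂ) + z * q)) z)).differentiableWithinAt
  have hmv := mv_aux hd
  have hcont : Continuous fun x : ℝ => Complex.log ((p:ℂ) + Complex.exp (x*Complex.I) * q) := by
    rw [continuous_iff_continuousAt]
    intro x
    have hz1 : ‖Complex.exp ((x:ℂ)*Complex.I)‖ ≤ 1 := by
      rw [Complex.norm_exp]; simp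
    have hg : Continuous fun x : ℝ => (p:ℂ) + Complex.exp (x*Complex.I) * q := by continuity
    exact ContinuousAt.comp (f := fun x : ℝ => (p:ℂ) + Complex.exp (x*Complex.I) * q)
      (g := Complex.log) (continuousAt_clog (hmem _ hz1)) hg.continuousAt
  have hii : IntervalIntegrable
      (fun x : ℝ => Complex.log ((p:ℂ) + Complex.exp (x*Complex.I) * q)) volume 0 (2*π) :=
    hcont.intervalIntegrable _ _
  have hre := Complex.reCLM.intervalIntegral_comp_comm hii
  simp only [Complex.reCLM_apply] at hre
  have heq : ∀ x : ℝ, (Complex.log ((p:ℂ) + Complex.exp (x*Complex.I) * q)).re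
      = Real.log (‖(p:ℂ) + Complex.exp (x*Complex.I) * q‖) := fun x => Complex.log_re _
  calc ∫ x in (0:ℝ)..(2*π), Real.log (‖(p:ℂ) + Complex.exp (x*Complex.I) * q‖)
      = ∫ x in (0:ℝ)..(2*π), (Complex.log ((p:ℂ) + Complex.exp (x*Complex.I) * q)).re := by
        simp_rw [heq]
    _ = (∫ x in (0:ℝ)..(2*π), Complex.log ((p:ℂ) + Complex.exp (x*Complex.I) * q)).re := hre
    _ = ((2*π) * Complex.log ((p:ℂ) + 0 * q)).re := by rw [hmv]
    _ = (2*π) * Real.log p := by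
        simp [Complex.log_re, Complex.norm_of_nonneg hp.le]

lemma Jval {A B : ℝ} (hB : 0 ≤ B) (hAB : B + 1 ≤ A) :
    ∫ x in (0:ℝ)..(2*π), Real.log (A + B * Real.cos x)
      = (2*π) * Real.log ((A + Real.sqrt (A^2 - B^2)) / 2) := by
  set sp := Real.sqrt (A+B) with hsp
  set sm := Real.sqrt (A-B) with hsm
  have hABp : 0 ≤ A+B := by linarith
  have hABm : 1 ≤ A-B := by linarith
  have hsp2 : sp^2 = A+B := Real.sq_sqrt hABp
  have hsm2 : sm^2 = A-B := Real.sq_sqrt (by linarith)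
  have hsm0 : 0 ≤ sm := Real.sqrt_nonneg _
  have hsm1 : 1 ≤ sm := by nlinarith [hsm2]
  have hspm : sm ≤ sp := Real.sqrt_le_sqrt (by linarith)
  set p := (sp+sm)/2 with hp
  set q := (sp-sm)/2 with hq
  have hq0 : 0 ≤ q := by rw [hq]; linarith
  have hqp : q < p := by rw [hq, hp]; linarith
  have hp0 : 0 < p := lt_of_le_of_lt hq0 hqp
  have key : ∀ x : ℝ, A + B * Real.cos x
      = (‖(p:ℂ) + Complex.exp (x*Complex.I) * q‖)^2 := by
    intro x
    rw [Complex.sq_norm, Complex.normSq_apply]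
    simp only [Complex.add_re, Complex.add_im, Complex.mul_re, Complex.mul_im,
      Complex.ofReal_re, Complex.ofReal_im, Complex.exp_ofReal_mul_I_re,
      Complex.exp_ofReal_mul_I_im]
    have hsc := Real.sin_sq_add_cos_sq x
    have hA2 : A = p^2 + q^2 := by rw [hp, hq]; nlinarith [hsp2, hsm2]
    have hB2 : B = 2*p*q := by rw [hp, hq]; nlinarith [hsp2, hsm2]
    linear_combination hA2 + Real.cos x * hB2 - q^2 * hsc
  have key2 : ∀ x : ℝ, Real.log (A + B * Real.cos x)
      = 2 * Real.log (‖(p:ℂ) + Complex.exp (x*Complex.I) * q‖) := by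
    intro x
    rw [key x, Real.log_pow]
    norm_num
  have hps : p^2 = (A + Real.sqrt (A^2 - B^2)) / 2 := by
    have hmul : sp * sm = Real.sqrt (A^2 - B^2) := by
      rw [hsp, hsm, ← Real.sqrt_mul hABp]
      congr 1; ring
    rw [hp]
    nlinarith [hsp2, hsm2, hmul]
  calc ∫ x in (0:ℝ)..(2*π), Real.log (A + B * Real.cos x)
      = ∫ x in (0:ℝ)..(2*π),
          2 * Real.log (‖(p:ℂ) + Complex.exp (x*Complex.I) * q‖) := by
        simp_rw [key2]
    _ = 2 * ∫ x in (0:ℝ)..(2*π),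
          Real.log (‖(p:ℂ) + Complex.exp (x*Complex.I) * q‖) :=
        intervalIntegral.integral_const_mul _ _
    _ = 2 * ((2*π) * Real.log p) := by rw [logint hq0 hqp]
    _ = (2*π) * Real.log (p^2) := by rw [Real.log_pow]; push_cast; ring
    _ = (2*π) * Real.log ((A + Real.sqrt (A^2 - B^2)) / 2) := by rw [hps]

lemma ure (u : ℂ) (t : ℝ) : (u * Complex.exp (t*Complex.I)).re
    = ‖u‖ * Real.cos (Complex.arg u + t) := by
  conv_lhs => rw [← Complex.norm_mul_exp_arg_mul_I u]
  rw [mul_assoc, ← Complex.exp_add]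
  have h : ((u.arg : ℂ)*Complex.I + (t:ℂ)*Complex.I) = ((u.arg + t : ℝ) : ℂ)*Complex.I := by
    push_cast; ring
  rw [h, Complex.re_ofReal_mul, Complex.exp_ofReal_mul_I_re]

lemma evalI (P : ℝ) (hP : 0 < P) (c y : ℂ) :
    ∫ x in (0:ℝ)..(2*π),
        Real.log (1 + ‖c + Complex.exp (x*Complex.I) * y‖^2 * P)
      = (2*π) * Real.log (((1 + (‖c‖^2 + ‖y‖^2)*P) +
          Real.sqrt ((1 + (‖c‖^2 + ‖y‖^2)*P)^2
            - (2*‖c‖*‖y‖*P)^2)) / 2) := by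
  set A := 1 + (‖c‖^2 + ‖y‖^2)*P with hA
  set B := 2*‖c‖*‖y‖*P with hB
  have hB0 : 0 ≤ B := by
    rw [hB]; positivity
  have hAB : B + 1 ≤ A := by
    rw [hA, hB]
    nlinarith [sq_nonneg (‖c‖ - ‖y‖), hP.le]
  set u := c * (starRingEnd ℂ) y with hu
  have habs_u : ‖u‖ = ‖c‖ * ‖y‖ := by
    rw [hu, norm_mul, Complex.norm_conj]
  set α := Complex.arg u with hα
  have key : ∀ x : ℝ, 1 + ‖c + Complex.exp (x*Complex.I) * y‖^2 * P
      = A + B * Real.cos (α - x) := by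
    intro x
    have h1 : ‖c + Complex.exp (x*Complex.I) * y‖^2
        = Complex.normSq (c + Complex.exp (x*Complex.I) * y) := Complex.sq_norm _
    rw [h1, Complex.normSq_add]
    have h2 : Complex.normSq (Complex.exp (x*Complex.I) * y) = Complex.normSq y := by
      rw [Complex.normSq_mul]
      have : Complex.normSq (Complex.exp ((x:ℂ)*Complex.I)) = 1 := by
        rw [Complex.normSq_eq_norm_sq, Complex.norm_exp]; simp
      rw [this, one_mul]
    have h3 : (c * (starRingEnd ℂ) (Complex.exp (x*Complex.I) * y))
        = u * Complex.exp ((-x : ℝ)*Complex.I) := by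
      rw [map_mul, ← Complex.exp_conj]
      have hc : (starRingEnd ℂ) ((x:ℂ) * Complex.I) = ((-x : ℝ):ℂ) * Complex.I := by
        simp [Complex.conj_I]
      rw [hc, hu]
      ring
    rw [h2, h3, ure u (-x), habs_u]
    rw [show α + -x = α - x by ring] at *
    have h4 : Complex.normSq c = ‖c‖^2 := (Complex.sq_norm c).symm
    have h5 : Complex.normSq y = ‖y‖^2 := (Complex.sq_norm y).symm
    rw [h4, h5, hA, hB, hα]
    ring
  have hper : Function.Periodic (fun t => Real.log (A + B * Real.cos t)) (2*π) := by
    intro t; simp [Real.cos_add_two_pi]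
  calc ∫ x in (0:ℝ)..(2*π),
        Real.log (1 + ‖c + Complex.exp (x*Complex.I) * y‖^2 * P)
      = ∫ x in (0:ℝ)..(2*π), Real.log (A + B * Real.cos (α - x)) := by
        apply intervalIntegral.integral_congr
        intro x _
        dsimp only
        rw [key x]
    _ = ∫ x in (α - 2*π)..(α - 0), Real.log (A + B * Real.cos x) :=
        intervalIntegral.integral_comp_sub_left (fun t => Real.log (A + B * Real.cos t)) α
    _ = ∫ x in (0:ℝ)..(2*π), Real.log (A + B * Real.cos x) := by
        rw [sub_zero]
        have h := hper.intervalIntegral_add_eq (α - 2*π) 0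
        simp only [zero_add] at h
        calc ∫ x in (α - 2*π)..α, Real.log (A + B * Real.cos x)
            = ∫ x in (α - 2*π)..(α - 2*π + 2*π), Real.log (A + B * Real.cos x) := by
              congr 1; ring
          _ = ∫ x in (0:ℝ)..(2*π), Real.log (A + B * Real.cos x) := h
    _ = (2*π) * Real.log ((A + Real.sqrt (A^2 - B^2)) / 2) := Jval hB0 hAB

lemma mono_sqrt (P a : ℝ) (hP : 0 < P) {r₀ r₁ : ℝ} (h0 : 0 ≤ r₀) (h : r₀ ≤ r₁) :
    (1 + (a^2 + r₀^2)*P) + Real.sqrt ((1 + (a^2+r₀^2)*P)^2 - (2*a*r₀*P)^2)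
    ≤ (1 + (a^2+r₁^2)*P) + Real.sqrt ((1 + (a^2+r₁^2)*P)^2 - (2*a*r₁*P)^2) := by
  set E₀ := (1 + (a^2+r₀^2)*P)^2 - (2*a*r₀*P)^2 with hE0
  set E₁ := (1 + (a^2+r₁^2)*P)^2 - (2*a*r₁*P)^2 with hE1
  have hE0' : E₀ = (1 + P*(r₀^2-a^2))^2 + 4*P*a^2 := by rw [hE0]; ring
  have hE1' : E₁ = (1 + P*(r₁^2-a^2))^2 + 4*P*a^2 := by rw [hE1]; ring
  have hE0nn : 0 ≤ E₀ := by rw [hE0']; positivity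
  have hE1nn : 0 ≤ E₁ := by rw [hE1']; positivity
  set u₀ := Real.sqrt E₀ with hu0
  set u₁ := Real.sqrt E₁ with hu1
  have hu0sq : u₀^2 = E₀ := Real.sq_sqrt hE0nn
  have hu1sq : u₁^2 = E₁ := Real.sq_sqrt hE1nn
  have hu0nn : 0 ≤ u₀ := Real.sqrt_nonneg _
  have hu1nn : 0 ≤ u₁ := Real.sqrt_nonneg _
  have hlb : -(1 + P*(r₁^2-a^2)) ≤ u₁ := by
    by_cases hX : 0 ≤ 1 + P*(r₁^2-a^2)
    · linarith
    · push_neg at hX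
      nlinarith [hu1sq, hE1']
  have hr : r₀^2 ≤ r₁^2 := by nlinarith
  have hΔ : 0 ≤ P*(r₁^2 - r₀^2) := mul_nonneg hP.le (by linarith)
  have hRHS0 : 0 ≤ P*(r₁^2 - r₀^2) + u₁ := by linarith
  have hsq : E₀ ≤ (P*(r₁^2 - r₀^2) + u₁)^2 := by
    nlinarith [hu1sq, hE0', hE1', hlb, hΔ]
  have hu0le : u₀ ≤ P*(r₁^2 - r₀^2) + u₁ := by
    rw [hu0]
    calc Real.sqrt E₀ ≤ Real.sqrt ((P*(r₁^2 - r₀^2) + u₁)^2) := Real.sqrt_le_sqrt hsq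
      _ = P*(r₁^2 - r₀^2) + u₁ := Real.sqrt_sq hRHS0
  linarith

lemma lemA (P : ℝ) (hP : 0 < P) (c y₀ y₁ : ℂ) (hy : ‖y₀‖ ≤ ‖y₁‖) :
    (∫ x in (0:ℝ)..(2*π), Real.log (1 + ‖c + Complex.exp (x*Complex.I) * y₀‖^2 * P))
      ≤ ∫ x in (0:ℝ)..(2*π), Real.log (1 + ‖c + Complex.exp (x*Complex.I) * y₁‖^2 * P) := by
  rw [evalI P hP c y₀, evalI P hP c y₁]
  have h2π : (0:ℝ) ≤ 2*π := by positivity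
  apply mul_le_mul_of_nonneg_left _ h2π
  have hm := mono_sqrt P (‖c‖) hP (norm_nonneg y₀) hy
  have hpos : (0:ℝ) < ((1 + (‖c‖^2 + ‖y₀‖^2)*P) +
      Real.sqrt ((1 + (‖c‖^2 + ‖y₀‖^2)*P)^2
        - (2*‖c‖*‖y₀‖*P)^2)) / 2 := by
    have h1 : (0:ℝ) ≤ (‖c‖^2 + ‖y₀‖^2)*P :=
      mul_nonneg (by positivity) hP.le
    have h2 := Real.sqrt_nonneg ((1 + (‖c‖^2 + ‖y₀‖^2)*P)^2
        - (2*‖c‖*‖y₀‖*P)^2)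
    linarith
  exact Real.log_le_log hpos (by linarith)

lemma Gmono (β d : ℝ) :
    ‖(1 - ((2:ℂ))⁻¹) + ((2:ℂ))⁻¹ * Complex.exp ((β:ℂ) * Complex.I)‖
      ≤ ‖(1 - (d:ℂ)) + (d:ℂ) * Complex.exp ((β:ℂ)*Complex.I)‖ := by
  have h1 : ∀ e : ℝ, ‖(1 - (e:ℂ)) + (e:ℂ) * Complex.exp ((β:ℂ)*Complex.I)‖^2
      = (1-e)^2 + 2*e*(1-e)*Real.cos β + e^2 := by
    intro e
    rw [Complex.sq_norm, Complex.normSq_apply]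
    simp only [Complex.add_re, Complex.add_im, Complex.sub_re, Complex.sub_im, Complex.one_re,
      Complex.one_im, Complex.mul_re, Complex.mul_im, Complex.ofReal_re, Complex.ofReal_im,
      Complex.exp_ofReal_mul_I_re, Complex.exp_ofReal_mul_I_im]
    have := Real.sin_sq_add_cos_sq β
    nlinarith
  have h2 : ((2:ℂ))⁻¹ = (((2:ℝ)⁻¹ : ℝ) : ℂ) := by push_cast; ring
  have h0 : ∀ e : ℝ, 0 ≤ ‖(1 - (e:ℂ)) + (e:ℂ) * Complex.exp ((β:ℂ)*Complex.I)‖ :=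
    fun e => norm_nonneg _
  rw [h2]
  have hsq : ‖(1 - (((2:ℝ)⁻¹:ℝ):ℂ)) + (((2:ℝ)⁻¹:ℝ):ℂ) * Complex.exp ((β:ℂ)*Complex.I)‖^2
      ≤ ‖(1 - (d:ℂ)) + (d:ℂ) * Complex.exp ((β:ℂ)*Complex.I)‖^2 := by
    rw [h1, h1]
    nlinarith [Real.cos_le_one β, sq_nonneg (d - 1/2),
      mul_nonneg (sq_nonneg (d - 1/2)) (sub_nonneg.mpr (Real.cos_le_one β))]
  nlinarith [h0 ((2:ℝ)⁻¹), h0 d]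

lemma unif_int (f : ℝ → ℝ) :
    ∫ x, f x ∂((ENNReal.ofReal (2*π))⁻¹ • volume.restrict (Set.Icc 0 (2*π)))
      = (2*π)⁻¹ * ∫ x in (0:ℝ)..(2*π), f x := by
  rw [MeasureTheory.integral_smul_measure, ENNReal.toReal_inv, ENNReal.toReal_ofReal (by positivity),
    smul_eq_mul]
  congr 1
  rw [intervalIntegral.integral_of_le (by positivity), ← integral_Icc_eq_integral_Ioc]

lemma one_add_sq_mul_pos {P : ℝ} (hP : 0 < P) (t : ℝ) : (0:ℝ) < 1 + t^2 * P := by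
  nlinarith [sq_nonneg t]

lemma log_abs_bound {P : ℝ} (hP : 0 < P) {z : ℂ} {C : ℝ} (h : ‖z‖ ≤ C) :
    |Real.log (1 + ‖z‖ ^ 2 * P)| ≤ Real.log (1 + C^2 * P) := by
  have h0 : 0 ≤ ‖z‖ := norm_nonneg z
  have h3 : ‖z‖ ^ 2 ≤ C^2 := by nlinarith [mul_le_mul h h h0 (le_trans h0 h)]
  have h1 : (1:ℝ) ≤ 1 + ‖z‖ ^ 2 * P := by nlinarith
  have h2 : 1 + ‖z‖ ^ 2 * P ≤ 1 + C^2 * P := by nlinarith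
  rw [abs_of_nonneg (Real.log_nonneg h1)]
  exact Real.log_le_log (by linarith) h2

/-- Auxiliary integrand on the product space. -/
noncomputable def gaux (L : ℕ) (b δb : Fin L → ℝ) (w : ℂ) (P : ℝ) (l : Fin L) (dl : ℝ)
    (p : ({j : Fin L // j ≠ l} → ℝ) × ℝ) : ℝ :=
  Real.log (1 + ‖
      (∑ j : {j : Fin L // j ≠ l}, (b j.1:ℂ) * Complex.exp (p.1 j * Complex.I)
        * ((1 - (δb j.1:ℂ)) + (δb j.1:ℂ)*w))
      + Complex.exp (p.2 * Complex.I) * ((b l:ℂ) * ((1 - (dl:ℂ)) + (dl:ℂ)*w))‖^2 * P)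

lemma gaux_cont (L : ℕ) (b δb : Fin L → ℝ) (w : ℂ) {P : ℝ} (hP : 0 < P) (l : Fin L) (dl : ℝ) :
    Continuous (gaux L b δb w P l dl) := by
  apply Continuous.log
  · apply Continuous.add continuous_const
    apply Continuous.mul _ continuous_const
    apply Continuous.pow
    apply continuous_norm.comp
    apply Continuous.add
    · apply continuous_finset_sum
      intro j _
      exact (continuous_const.mul ((Complex.continuous_exp.comp
        (((Complex.continuous_ofReal.comp ((continuous_apply j).comp continuous_fst))).mul
          continuous_const)))).mul continuous_const
    · exact ((Complex.continuous_exp.comp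
        ((Complex.continuous_ofReal.comp continuous_snd).mul continuous_const))).mul
        continuous_const
  · exact fun p => ne_of_gt (one_add_sq_mul_pos hP _)

lemma gaux_bound (L : ℕ) (b δb : Fin L → ℝ) (w : ℂ) {P : ℝ} (hP : 0 < P) (l : Fin L) (dl : ℝ)
    (p : ({j : Fin L // j ≠ l} → ℝ) × ℝ) :
    |gaux L b δb w P l dl p| ≤ Real.log (1 +
      ((∑ j : {j : Fin L // j ≠ l}, ‖(b j.1:ℂ) * ((1 - (δb j.1:ℂ)) + (δb j.1:ℂ)*w)‖)
        + ‖(b l:ℂ) * ((1 - (dl:ℂ)) + (dl:ℂ)*w)‖)^2 * P) := by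
  apply log_abs_bound hP
  refine le_trans (norm_add_le _ _) (add_le_add ?_ ?_)
  · refine le_trans (norm_sum_le _ _) ?_
    apply Finset.sum_le_sum
    intro j _
    rw [norm_mul, norm_mul, norm_mul, Complex.norm_exp]
    have : ((p.1 j : ℂ) * Complex.I).re = 0 := by simp
    rw [this, Real.exp_zero]
    rw [mul_comm (‖(b j.1:ℂ)‖) 1, one_mul, ← norm_mul]
  · rw [norm_mul, Complex.norm_exp]
    have : ((p.2 : ℂ) * Complex.I).re = 0 := by simp
    rw [this, Real.exp_zero, one_mul]

lemma step_lemma {Ω : Type*} [MeasurableSpace Ω] (μ : Measure Ω) [IsProbabilityMeasure μ]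
    (L : ℕ) (θ : Fin L → Ω → ℝ) (hθmeas : ∀ l, Measurable (θ l))
    (hθindep : iIndepFun θ μ)
    (hθunif : ∀ l, μ.map (θ l)
      = (ENNReal.ofReal (2 * π))⁻¹ • volume.restrict (Set.Icc 0 (2 * π)))
    (P : ℝ) (hP : 0 < P) (w : ℂ) (b : Fin L → ℝ)
    (l : Fin L) (δa δb : Fin L → ℝ)
    (hagree : ∀ j, j ≠ l → δa j = δb j)
    (habs : ‖(b l : ℂ) * ((1 - (δa l:ℂ)) + (δa l:ℂ)*w)‖
      ≤ ‖(b l : ℂ) * ((1 - (δb l:ℂ)) + (δb l:ℂ)*w)‖) :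
    (∫ ω, Real.log (1 + ‖∑ j, (b j:ℂ) * Complex.exp (θ j ω * Complex.I)
        * ((1 - (δa j:ℂ)) + (δa j:ℂ)*w)‖^2 * P) ∂μ)
    ≤ ∫ ω, Real.log (1 + ‖∑ j, (b j:ℂ) * Complex.exp (θ j ω * Complex.I)
        * ((1 - (δb j:ℂ)) + (δb j:ℂ)*w)‖^2 * P) ∂μ := by
  classical
  set T : Ω → ({j : Fin L // j ≠ l} → ℝ) := fun ω j => θ j.1 ω with hT
  have hTmeas : Measurable T := measurable_pi_lambda _ (fun j => hθmeas j.1)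
  have hSl : IndepFun T (θ l) μ := by
    have h := hθindep.indepFun_finset ({l}ᶜ) {l} (by simp) hθmeas
    have h2 := h.comp
      (φ := fun v (j : {j : Fin L // j ≠ l}) => v ⟨j.1, Finset.mem_compl.mpr (by simp [j.2])⟩)
      (ψ := fun v => v ⟨l, Finset.mem_singleton_self l⟩) (_mγ' := Real.measurableSpace)
      (measurable_pi_lambda _ (fun j => measurable_pi_apply _))
      (measurable_pi_apply (⟨l, Finset.mem_singleton_self l⟩ : ({l} : Finset (Fin L))))
    exact h2
  have hmap : μ.map (fun ω => (T ω, θ l ω)) = (μ.map T).prod (μ.map (θ l)) :=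
    (indepFun_iff_map_prod_eq_prod_map_map hTmeas.aemeasurable
      (hθmeas l).aemeasurable).mp hSl
  have hprob1 : IsProbabilityMeasure (μ.map T) :=
    Measure.isProbabilityMeasure_map hTmeas.aemeasurable
  have hprob2 : IsProbabilityMeasure (μ.map (θ l)) :=
    Measure.isProbabilityMeasure_map (hθmeas l).aemeasurable
  -- pointwise rewriting
  have hrw : ∀ (δc : Fin L → ℝ), (∀ j, j ≠ l → δc j = δb j) → ∀ ω,
      Real.log (1 + ‖∑ j, (b j:ℂ) * Complex.exp (θ j ω * Complex.I)
        * ((1 - (δc j:ℂ)) + (δc j:ℂ)*w)‖^2 * P) = gaux L b δb w P l (δc l) (T ω, θ l ω) := by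
    intro δc hc ω
    rw [gaux]
    have hsum : (∑ j, (b j:ℂ) * Complex.exp (θ j ω * Complex.I)
          * ((1 - (δc j:ℂ)) + (δc j:ℂ)*w))
        = (∑ j : {j : Fin L // j ≠ l}, (b j.1:ℂ) * Complex.exp (θ j.1 ω * Complex.I)
            * ((1 - (δb j.1:ℂ)) + (δb j.1:ℂ)*w))
          + Complex.exp (θ l ω * Complex.I) * ((b l:ℂ) * ((1 - (δc l:ℂ)) + (δc l:ℂ)*w)) := by
      rw [Fintype.sum_eq_add_sum_compl l, add_comm]
      congr 1
      · rw [Finset.sum_subtype (p := fun j => j ≠ l) ({l}ᶜ) (fun x => by simp)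
          (fun j => (b j:ℂ) * Complex.exp (θ j ω * Complex.I) * ((1 - (δc j:ℂ)) + (δc j:ℂ)*w))]
        apply Finset.sum_congr rfl
        intro j _
        rw [hc j.1 j.2]
      · ring
    rw [hsum]
  -- integrability
  have hint : ∀ dl, Integrable (gaux L b δb w P l dl) ((μ.map T).prod (μ.map (θ l))) := by
    intro dl
    refine Integrable.mono' (integrable_const (Real.log (1 +
      ((∑ j : {j : Fin L // j ≠ l}, ‖(b j.1:ℂ) * ((1 - (δb j.1:ℂ)) + (δb j.1:ℂ)*w)‖)
        + ‖(b l:ℂ) * ((1 - (dl:ℂ)) + (dl:ℂ)*w)‖)^2 * P)))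
      ((gaux_cont L b δb w hP l dl).aestronglyMeasurable) ?_
    filter_upwards with p
    rw [Real.norm_eq_abs]
    exact gaux_bound L b δb w hP l dl p
  -- expansion into iterated integrals
  have expand : ∀ (δc : Fin L → ℝ), (∀ j, j ≠ l → δc j = δb j) →
      (∫ ω, Real.log (1 + ‖∑ j, (b j:ℂ) * Complex.exp (θ j ω * Complex.I)
        * ((1 - (δc j:ℂ)) + (δc j:ℂ)*w)‖^2 * P) ∂μ)
      = ∫ yy, ∫ x, gaux L b δb w P l (δc l) (yy, x) ∂(μ.map (θ l)) ∂(μ.map T) := by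
    intro δc hc
    calc (∫ ω, Real.log (1 + ‖∑ j, (b j:ℂ) * Complex.exp (θ j ω * Complex.I)
            * ((1 - (δc j:ℂ)) + (δc j:ℂ)*w)‖^2 * P) ∂μ)
        = ∫ ω, gaux L b δb w P l (δc l) (T ω, θ l ω) ∂μ := by
          apply MeasureTheory.integral_congr_ae
          filter_upwards with ω
          exact hrw δc hc ω
      _ = ∫ p, gaux L b δb w P l (δc l) p ∂(μ.map (fun ω => (T ω, θ l ω))) :=
          (integral_map (hTmeas.prodMk (hθmeas l)).aemeasurable
            ((gaux_cont L b δb w hP l _).aestronglyMeasurable)).symm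
      _ = ∫ p, gaux L b δb w P l (δc l) p ∂((μ.map T).prod (μ.map (θ l))) := by rw [hmap]
      _ = ∫ yy, ∫ x, gaux L b δb w P l (δc l) (yy, x) ∂(μ.map (θ l)) ∂(μ.map T) :=
          integral_prod _ (hint (δc l))
  rw [expand δa hagree, expand δb (fun j _ => rfl)]
  apply integral_mono (hint (δa l)).integral_prod_left (hint (δb l)).integral_prod_left
  intro yy
  simp only
  rw [hθunif l]
  rw [unif_int (fun x => gaux L b δb w P l (δa l) (yy, x)),
    unif_int (fun x => gaux L b δb w P l (δb l) (yy, x))]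
  apply mul_le_mul_of_nonneg_left _ (by positivity)
  simp only [gaux]
  exact lemA P hP _ _ _ habs

end Aux

/-- Worst-case fractional delays: with i.i.d. `θ_l ~ Uniform(0,2π)`,
`b ∈ {0,1}^L`, and `G_l(k) = (1−δ_l) + δ_l e^{−2πik/K}`, the per-subcarrier
rate `F(b, δ, k) = E[log(1 + |∑ b_l e^{iθ_l} G_l(k)|² P)]` is minimized over
`δ ∈ [0,1)^L` at `δ = (1/2,…,1/2)`. -/
theorem worst_case_delay_half
    {Ω : Type*} [MeasurableSpace Ω] (μ : Measure Ω) [IsProbabilityMeasure μ]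
    (L : ℕ) (θ : Fin L → Ω → ℝ) (hθmeas : ∀ l, Measurable (θ l))
    (hθindep : iIndepFun θ μ)
    (hθunif : ∀ l, μ.map (θ l)
      = (ENNReal.ofReal (2 * π))⁻¹ • volume.restrict (Set.Icc 0 (2 * π)))
    (P : ℝ) (hP : 0 < P) (K : ℕ) (hK : 1 ≤ K) (k : ℕ) (hk : k < K)
    (b : Fin L → ℝ) (hb : ∀ l, b l = 0 ∨ b l = 1)
    (F : (Fin L → ℝ) → ℝ)
    (hF : ∀ δ : Fin L → ℝ,
      F δ = ∫ ω, Real.log (1 + ‖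
          (∑ l, (b l : ℂ) * Complex.exp (θ l ω * Complex.I)
            * ((1 - (δ l : ℂ))
                + (δ l : ℂ) * Complex.exp (-(2 * π * k / K) * Complex.I)))‖ ^ 2
          * P) ∂μ) :
    ∀ δ : Fin L → ℝ, (∀ l, 0 ≤ δ l ∧ δ l < 1) →
      F (fun _ => 1 / 2) ≤ F δ := by
  intro δ hδ
  classical
  set β : ℝ := -(2 * π * k / K) with hβ
  have hwcast : (-(2 * (π:ℂ) * (k:ℂ) / (K:ℂ)) : ℂ) = ((β : ℝ) : ℂ) := by
    rw [hβ]; push_cast; ring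
  -- the sequence of hybrid delay vectors
  set D : ℕ → Fin L → ℝ := fun m j => if (j:ℕ) < m then δ j else 1/2 with hD
  have hD0 : (fun _ : Fin L => (1:ℝ)/2) = D 0 := by
    funext j; simp [hD]
  have hDL : D L = δ := by
    funext j; simp [hD, j.isLt]
  have hstep : ∀ m, F (D m) ≤ F (D (m+1)) := by
    intro m
    by_cases hm : m < L
    · set l : Fin L := ⟨m, hm⟩ with hl
      have hagree : ∀ j, j ≠ l → D m j = D (m+1) j := by
        intro j hj
        have hjm : (j:ℕ) ≠ m := by
          intro h; exact hj (Fin.ext h)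
        simp only [hD]
        by_cases h' : (j:ℕ) < m
        · rw [if_pos h', if_pos (Nat.lt_succ_of_lt h')]
        · rw [if_neg h', if_neg (by omega)]
      have hDml : D m l = 1/2 := by simp [hD, hl]
      have hDm1l : D (m+1) l = δ l := by simp [hD, hl]
      have hGm := Gmono β (δ l)
      have hhalf : (((1:ℝ)/2 : ℝ) : ℂ) = ((2:ℂ))⁻¹ := by norm_num
      have habs : ‖(b l : ℂ) * ((1 - (D m l:ℂ)) + (D m l:ℂ)
            * Complex.exp (-(2 * (π:ℂ) * (k:ℂ) / (K:ℂ)) * Complex.I))‖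
          ≤ ‖(b l : ℂ) * ((1 - (D (m+1) l:ℂ)) + (D (m+1) l:ℂ)
            * Complex.exp (-(2 * (π:ℂ) * (k:ℂ) / (K:ℂ)) * Complex.I))‖ := by
        rw [hDml, hDm1l, hwcast, norm_mul, norm_mul]
        refine mul_le_mul_of_nonneg_left ?_ (norm_nonneg _)
        rw [hhalf]
        exact hGm
      have hs := step_lemma μ L θ hθmeas hθindep hθunif P hP
        (Complex.exp (-(2 * (π:ℂ) * (k:ℂ) / (K:ℂ)) * Complex.I)) b l (D m) (D (m+1))
        hagree habs
      rw [hF (D m), hF (D (m+1))]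
      exact hs
    · have : D m = D (m+1) := by
        funext j
        have hjm : (j:ℕ) < m := lt_of_lt_of_le j.isLt (not_lt.mp hm)
        simp only [hD]
        rw [if_pos hjm, if_pos (Nat.lt_succ_of_lt hjm)]
      rw [this]
  have hchain : ∀ m, F (D 0) ≤ F (D m) := by
    intro m
    induction m with
    | zero => exact le_refl _
    | succ n ih => exact ih.trans (hstep n)
  calc F (fun _ => 1 / 2) = F (D 0) := by rw [hD0]
    _ ≤ F (D L) := hchain L
    _ = F δ := by rw [hDL]
end

section
/- Let α ~ Binomial(L, 1 − p_B) and P > 0, and let R̄ : {0,…,L} → ℝ be nonnegative and increasing with R̄(0) = 0. Then sup_{r ∈ ℝ} r·P(R̄(α) ≥ r) = max_{i ∈ {1,…,L}} P(α ≥ i)·R̄(i). -/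
open MeasureTheory

/-- Outage rate formula for phase diversity: with `α ~ Binomial(L, 1 − p_B)`
and `R̄ : ℕ → ℝ` nonnegative, increasing, `R̄(0) = 0`,
`sup_r r·P(R̄(α) ≥ r) = max_{i ∈ {1,…,L}} P(α ≥ i)·R̄(i)`. -/
theorem outage_rate_formula
    {Ω : Type*} [MeasurableSpace Ω] (μ : Measure Ω) [IsProbabilityMeasure μ]
    (L : ℕ) (hL : 1 ≤ L) (p_B : ℝ) (hpB0 : 0 ≤ p_B) (hpB1 : p_B < 1)
    (α : Ω → ℕ) (hmeas : Measurable α) (hle : ∀ ω, α ω ≤ L)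
    (hbinom : ∀ i ≤ L, μ {ω | α ω = i}
      = ENNReal.ofReal ((L.choose i : ℝ) * (1 - p_B) ^ i * p_B ^ (L - i)))
    (P : ℝ) (hP : 0 < P)
    (R : ℕ → ℝ) (hRnonneg : ∀ i, 0 ≤ R i) (hRmono : Monotone R) (hR0 : R 0 = 0) :
    ⨆ r : ℝ, r * (μ {ω | r ≤ R (α ω)}).toReal
      = (Finset.Icc 1 L).sup' (Finset.nonempty_Icc.mpr hL)
          (fun i => (μ {ω | i ≤ α ω}).toReal * R i) := by
  set S := (Finset.Icc 1 L).sup' (Finset.nonempty_Icc.mpr hL)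
      (fun i => (μ {ω | i ≤ α ω}).toReal * R i) with hS
  have hSnonneg : 0 ≤ S := by
    refine le_trans ?_ (Finset.le_sup' _ (Finset.mem_Icc.mpr ⟨le_refl 1, hL⟩))
    exact mul_nonneg ENNReal.toReal_nonneg (hRnonneg 1)
  have hbound : ∀ r : ℝ, r * (μ {ω | r ≤ R (α ω)}).toReal ≤ S := by
    intro r
    rcases le_or_gt r 0 with hr | hr
    · exact le_trans (mul_nonpos_of_nonpos_of_nonneg hr ENNReal.toReal_nonneg) hSnonneg
    by_cases hex : ∃ i, r ≤ R i
    · classical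
      set i0 := Nat.find hex with hi0
      have hspec : r ≤ R i0 := Nat.find_spec hex
      have hi0pos : 1 ≤ i0 := by
        rcases Nat.eq_zero_or_pos i0 with h0 | h0
        · exfalso; have := hspec; rw [h0, hR0] at this; linarith
        · exact h0
      have hsub : {ω | r ≤ R (α ω)} ⊆ {ω | i0 ≤ α ω} := by
        intro ω hω
        exact Nat.find_le hω
      by_cases hi0L : i0 ≤ L
      · have hmono : (μ {ω | r ≤ R (α ω)}).toReal ≤ (μ {ω | i0 ≤ α ω}).toReal :=
          ENNReal.toReal_mono (measure_ne_top μ _) (measure_mono hsub)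
        calc r * (μ {ω | r ≤ R (α ω)}).toReal
            ≤ R i0 * (μ {ω | i0 ≤ α ω}).toReal :=
              mul_le_mul hspec hmono ENNReal.toReal_nonneg (hRnonneg i0)
          _ = (μ {ω | i0 ≤ α ω}).toReal * R i0 := mul_comm _ _
          _ ≤ S := Finset.le_sup' (fun i => (μ {ω | i ≤ α ω}).toReal * R i)
              (Finset.mem_Icc.mpr ⟨hi0pos, hi0L⟩)
      · push_neg at hi0L
        have hempty : {ω | r ≤ R (α ω)} = ∅ := by
          ext ω
          simp only [Set.mem_setOf_eq, Set.mem_empty_iff_false, iff_false]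
          intro hω
          exact absurd (le_trans (hsub hω) (hle ω)) (not_le.mpr hi0L)
        rw [hempty, measure_empty]
        simpa using hSnonneg
    · push_neg at hex
      have : {ω | r ≤ R (α ω)} = ∅ := by
        ext ω; simp only [Set.mem_setOf_eq, Set.mem_empty_iff_false, iff_false, not_le]
        exact hex (α ω)
      rw [this, measure_empty]
      simp [hSnonneg]
  refine le_antisymm (ciSup_le hbound) ?_
  refine Finset.sup'_le _ _ ?_
  intro i hi
  have hle2 : (μ {ω | (i : ℕ) ≤ α ω}).toReal * R i
      ≤ R i * (μ {ω | R i ≤ R (α ω)}).toReal := by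
    rw [mul_comm]
    refine mul_le_mul_of_nonneg_left ?_ (hRnonneg i)
    exact ENNReal.toReal_mono (measure_ne_top μ _)
      (measure_mono (fun ω hω => hRmono hω))
  exact le_trans hle2 (le_ciSup ⟨S, Set.forall_mem_range.mpr hbound⟩ (R i))
end
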